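/- arXiv:2305.12813 — 7 statements merged into one kernel-verified Lean document; each statement's English description precedes it below -/
import Mathlib

section
/- Let X ⊆ ℝ^n be compact, X_s ⊆ X compact with 0 ∈ X_s, and let f : ℝ^n → ℝ^n be Lipschitz continuous and satisfy the stability prior with respect to X_s. Suppose L : ℝ^n → ℝ is Lipschitz continuous and there exists α ∈ ℝ such that: (1) X = {x ∈ ℝ^n : L(x) ≤ α}; (2) for every x ∈ X \ X_s and every y in the Clarke generalized gradient ∂_Cl L(x), ⟨f(x), y⟩ < 0 (Euclidean inner product). Then for every x₀ in the interior of X, every solution of x' = f(x) with initial condition x₀ satisfies x(t) → 0 as t → ∞. -/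
open Filter Metric MeasureTheory Set Topology

/-- `x : ℝ → ℝⁿ` is a solution of `x' = F(x)` with initial condition `x₀`:
`x 0 = x₀` and for every `t ≥ 0`, `x` is differentiable at `t` with derivative `F (x t)`. -/
def IsSolution {n : ℕ} (F : EuclideanSpace ℝ (Fin n) → EuclideanSpace ℝ (Fin n))
    (x₀ : EuclideanSpace ℝ (Fin n)) (x : ℝ → EuclideanSpace ℝ (Fin n)) : Prop :=
  x 0 = x₀ ∧ ∀ t : ℝ, 0 ≤ t → HasDerivAt x (F (x t)) t

/-- `F` satisfies the stability prior with respect to `Xs ∋ 0`: `F 0 = 0`, there is `δ > 0`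
such that every solution starting in the open ball of radius `δ` converges to `0`, and every
solution starting in `Xs` converges to `0`. -/
def StabilityPrior {n : ℕ} (F : EuclideanSpace ℝ (Fin n) → EuclideanSpace ℝ (Fin n))
    (Xs : Set (EuclideanSpace ℝ (Fin n))) : Prop :=
  F 0 = 0 ∧
  (∃ δ > (0:ℝ), ∀ x : ℝ → EuclideanSpace ℝ (Fin n), ‖x 0‖ < δ →
    (∀ t : ℝ, 0 ≤ t → HasDerivAt x (F (x t)) t) → Tendsto x atTop (nhds 0)) ∧
  (∀ x : ℝ → EuclideanSpace ℝ (Fin n), x 0 ∈ Xs →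
    (∀ t : ℝ, 0 ≤ t → HasDerivAt x (F (x t)) t) → Tendsto x atTop (nhds 0))

/-- The Clarke generalized gradient of `L` at `x`: the convex hull of the set of limits of
gradients of `L` at nearby points of differentiability. -/
def ClarkeGradient {n : ℕ} (L : EuclideanSpace ℝ (Fin n) → ℝ)
    (x : EuclideanSpace ℝ (Fin n)) : Set (EuclideanSpace ℝ (Fin n)) :=
  convexHull ℝ {y | ∀ ε > (0:ℝ), ∃ z, ‖x - z‖ < ε ∧ DifferentiableAt ℝ L z ∧
    ‖y - gradient L z‖ < ε}

theorem oneDim_decay {φ : ℝ → ℝ} {M : NNReal} (hφ : LipschitzWith M φ) {c h : ℝ} (hh : 0 ≤ h)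
    (hd : ∀ᵐ s ∂(volume.restrict (Set.Icc (0:ℝ) h)), ∃ d, HasDerivAt φ d s ∧ d ≤ -c) :
    φ h - φ 0 ≤ -c * h := by
  set Eg : Set ℝ := {s | ∃ d, HasDerivAt φ d s ∧ d ≤ -c} with hEg
  have hN : volume (Egᶜ ∩ Icc (0:ℝ) h) = 0 := by
    have := hd
    rw [MeasureTheory.ae_iff] at this
    rw [Measure.restrict_apply' measurableSet_Icc] at this
    exact this
  have key : ∀ ε > (0:ℝ), φ h - φ 0 ≤ -c * h + ε * h + ((M:ℝ) + |c| + 1) * ε := by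
    intro ε hε
    obtain ⟨U, hNU, hUopen, hUvol⟩ :=
      Set.exists_isOpen_lt_of_lt (Egᶜ ∩ Icc (0:ℝ) h) (ENNReal.ofReal ε)
        (by rw [hN]; exact ENNReal.ofReal_pos.2 hε)
    have hUfin : volume U ≠ ⊤ := (hUvol.trans ENNReal.ofReal_lt_top).ne
    set C : ℝ := (M:ℝ) + |c| + 1 with hC
    set ρ : ℝ → ℝ := fun u => (volume (U ∩ Ioc (0:ℝ) u)).toReal with hρ
    have ρfin : ∀ u, volume (U ∩ Ioc (0:ℝ) u) ≠ ⊤ :=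
      fun u => ((measure_mono Set.inter_subset_left).trans_lt hUfin.lt_top).ne
    have ρnonneg : ∀ u, 0 ≤ ρ u := fun u => ENNReal.toReal_nonneg
    have ρzero : ∀ u, u ≤ 0 → ρ u = 0 := by
      intro u hu
      simp [hρ, Set.Ioc_eq_empty (not_lt.2 hu)]
    have ρmono : Monotone ρ := by
      intro u u' huu'
      exact ENNReal.toReal_mono (ρfin u')
        (measure_mono (Set.inter_subset_inter_right _ (Ioc_subset_Ioc_right huu')))
    have ρadd : ∀ u u', u ≤ u' → 0 ≤ u → ρ u' = ρ u + (volume (U ∩ Ioc u u')).toReal := by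
      intro u u' huu' hu
      have hsplit : U ∩ Ioc (0:ℝ) u' = (U ∩ Ioc 0 u) ∪ (U ∩ Ioc u u') := by
        rw [← Set.inter_union_distrib_left, Set.Ioc_union_Ioc_eq_Ioc hu huu']
      have hdisj : Disjoint (U ∩ Ioc (0:ℝ) u) (U ∩ Ioc u u') :=
        Set.disjoint_of_subset Set.inter_subset_right Set.inter_subset_right
          (Set.Ioc_disjoint_Ioc_of_le le_rfl)
      show (volume (U ∩ Ioc (0:ℝ) u')).toReal = _
      rw [hsplit, measure_union hdisj ((hUopen.measurableSet).inter measurableSet_Ioc),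
        ENNReal.toReal_add (ρfin u) (((measure_mono Set.inter_subset_left).trans_lt hUfin.lt_top).ne)]
    have ρdiff_le : ∀ u u', u ≤ u' → (volume (U ∩ Ioc u u')).toReal ≤ u' - u := by
      intro u u' huu'
      calc (volume (U ∩ Ioc u u')).toReal ≤ (volume (Ioc u u')).toReal :=
            ENNReal.toReal_mono (by simp [Real.volume_Ioc]) (measure_mono Set.inter_subset_right)
        _ = u' - u := by rw [Real.volume_Ioc, ENNReal.toReal_ofReal (by linarith)]
    have hstep : ∀ u u', u ≤ u' → ρ u' ≤ ρ u + (u' - u) := by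
      intro u u' hle
      rcases le_total 0 u with hu | hu
      · rw [ρadd u u' hle hu]; linarith [ρdiff_le u u' hle]
      · rcases le_total u' 0 with hu' | hu'
        · rw [ρzero u' hu', ρzero u hu]; linarith
        · rw [ρzero u hu, ρadd 0 u' hu' le_rfl, ρzero 0 le_rfl]
          linarith [ρdiff_le 0 u' hu']
    have ρcont : Continuous ρ := by
      refine LipschitzWith.continuous (K := 1) (LipschitzWith.of_dist_le_mul fun u u' => ?_)
      rw [NNReal.coe_one, one_mul, Real.dist_eq, Real.dist_eq]
      rcases le_total u u' with hle | hle
      · rw [abs_of_nonpos (by linarith [ρmono hle]), abs_of_nonpos (by linarith)]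
        linarith [hstep u u' hle]
      · rw [abs_of_nonneg (by linarith [ρmono hle]), abs_of_nonneg (by linarith)]
        linarith [hstep u' u hle]
    have φlip : ∀ u u', u ≤ u' → φ u' - φ u ≤ (M:ℝ) * (u' - u) := by
      intro u u' hle
      have h2 := hφ.dist_le_mul u' u
      rw [Real.dist_eq, Real.dist_eq, abs_of_nonneg (sub_nonneg.2 hle)] at h2
      calc φ u' - φ u ≤ |φ u' - φ u| := le_abs_self _
        _ ≤ (M:ℝ) * (u' - u) := h2
    set S : Set ℝ := {u | φ u - φ 0 - (-c + ε) * u - C * ρ u ≤ 0} with hS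
    have hSclosed : IsClosed (S ∩ Icc (0:ℝ) h) := by
      have hcont : Continuous fun u => φ u - φ 0 - (-c + ε) * u - C * ρ u :=
        ((hφ.continuous.sub continuous_const).sub (continuous_const.mul continuous_id)).sub
          (continuous_const.mul ρcont)
      exact (isClosed_le hcont continuous_const).inter isClosed_Icc
    have hCnn : (0:ℝ) ≤ C := by positivity
    have hmem0 : (0:ℝ) ∈ S := by simp [hS, ρzero 0 le_rfl]
    have hsub : Icc (0:ℝ) h ⊆ S := by
      apply hSclosed.Icc_subset_of_forall_exists_gt hmem0
      rintro u ⟨huS, hu0, huh⟩ y hy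
      have huS' : φ u - φ 0 - (-c + ε) * u - C * ρ u ≤ 0 := huS
      by_cases huE : u ∈ Eg
      · obtain ⟨d, hder, hdle⟩ := huE
        have h1 : Tendsto (slope φ u) (𝓝[≠] u) (𝓝 d) := hasDerivAt_iff_tendsto_slope.1 hder
        have h2 : ∀ᶠ u' in 𝓝[≠] u, slope φ u u' < d + ε :=
          h1.eventually (Filter.Tendsto.eventually_lt_const (by linarith) tendsto_id)
        have h3 : ∀ᶠ u' in 𝓝[>] u, slope φ u u' < d + ε :=
          h2.filter_mono (nhdsWithin_mono u (fun x hx => hx.ne'))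
        have h4 : Ioc u y ∈ 𝓝[>] u := Ioc_mem_nhdsGT_of_mem ⟨le_refl u, hy⟩
        obtain ⟨u', hu'slope, hu'mem⟩ := (h3.and (eventually_of_mem h4 (fun _ hm => hm))).exists
        refine ⟨u', ?_, hu'mem⟩
        have hu'u : u < u' := hu'mem.1
        have hφu' : φ u' - φ u ≤ (d + ε) * (u' - u) := by
          have hs2 : (φ u' - φ u) / (u' - u) < d + ε := by
            have : slope φ u u' = (φ u' - φ u) / (u' - u) := slope_def_field φ u u'
            linarith [this ▸ hu'slope]
          have := (div_lt_iff₀ (by linarith : (0:ℝ) < u' - u)).1 hs2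
          linarith
        have hρm : C * ρ u ≤ C * ρ u' := mul_le_mul_of_nonneg_left (ρmono hu'u.le) hCnn
        show φ u' - φ 0 - (-c + ε) * u' - C * ρ u' ≤ 0
        nlinarith [sub_nonneg.2 hu'u.le]
      · have huU : u ∈ U := hNU ⟨huE, ⟨hu0, huh.le⟩⟩
        obtain ⟨t₀, ht₀, hball⟩ := Metric.isOpen_iff.1 hUopen u huU
        set u' := min y (u + t₀/2) with hu'
        have hu'u : u < u' := lt_min hy (by linarith)
        have hsubU : Ioc u u' ⊆ U := by
          intro w hw
          apply hball
          rw [mem_ball, Real.dist_eq, abs_of_pos (by linarith [hw.1] : (0:ℝ) < w - u)]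
          have h5 : u' ≤ u + t₀/2 := min_le_right _ _
          have h6 := hw.2
          linarith
        have hρ2 : ρ u' = ρ u + (u' - u) := by
          rw [ρadd u u' hu'u.le hu0, Set.inter_eq_self_of_subset_right hsubU,
            Real.volume_Ioc, ENNReal.toReal_ofReal (by linarith)]
        have hφ2 : φ u' - φ u ≤ (M:ℝ) * (u' - u) := φlip u u' hu'u.le
        refine ⟨u', ?_, hu'u, min_le_left _ _⟩
        show φ u' - φ 0 - (-c + ε) * u' - C * ρ u' ≤ 0
        rw [hρ2]
        nlinarith [sub_nonneg.2 hu'u.le, le_abs_self c, abs_nonneg c]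
    have hhS : φ h - φ 0 - (-c + ε) * h - C * ρ h ≤ 0 := hsub ⟨hh, le_rfl⟩
    have hρh : ρ h ≤ ε := by
      have h1 : volume (U ∩ Ioc (0:ℝ) h) < ENNReal.ofReal ε :=
        (measure_mono Set.inter_subset_left).trans_lt hUvol
      linarith [ENNReal.toReal_lt_of_lt_ofReal h1]
    nlinarith [mul_le_mul_of_nonneg_left hρh hCnn]
  by_contra hcon
  push_neg at hcon
  set g : ℝ := φ h - φ 0 + c * h with hg
  have hgpos : 0 < g := by simp only [hg]; linarith
  set C : ℝ := (M:ℝ) + |c| + 1 with hC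
  have hCpos : (0:ℝ) < h + C + 1 := by positivity
  set ε : ℝ := g / (h + C + 1) with hε
  have hεpos : 0 < ε := div_pos hgpos hCpos
  have hεeq : ε * (h + C + 1) = g := div_mul_cancel₀ g hCpos.ne'
  have hk := key ε hεpos
  nlinarith

theorem grad_inner {n : ℕ} {L : EuclideanSpace ℝ (Fin n) → ℝ} {z v : EuclideanSpace ℝ (Fin n)}
    (hd : DifferentiableAt ℝ L z) :
    (inner ℝ (gradient L z) v : ℝ) = fderiv ℝ L z v := by
  have h1 : HasFDerivAt L ((InnerProductSpace.toDual ℝ _) (gradient L z)) z :=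
    hasGradientAt_iff_hasFDerivAt.1 hd.hasGradientAt
  rw [h1.fderiv]
  rfl

theorem grad_norm_le {n : ℕ} {L : EuclideanSpace ℝ (Fin n) → ℝ} {Kl : NNReal}
    (hL : LipschitzWith Kl L) {z : EuclideanSpace ℝ (Fin n)} (hd : DifferentiableAt ℝ L z) :
    ‖gradient L z‖ ≤ Kl := by
  have h2 : ‖gradient L z‖ = ‖fderiv ℝ L z‖ := by
    rw [gradient]
    exact LinearIsometryEquiv.norm_map _ _
  rw [h2]
  exact hd.hasFDerivAt.le_of_lipschitz hL

theorem space_decay {n : ℕ} {L : EuclideanSpace ℝ (Fin n) → ℝ} {Kl : NNReal}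
    (hL : LipschitzWith Kl L)
    {p v : EuclideanSpace ℝ (Fin n)} {c r : ℝ} (hr : 0 < r)
    (hgrad : ∀ z, ‖p - z‖ ≤ r → DifferentiableAt ℝ L z → (inner ℝ v (gradient L z) : ℝ) ≤ -c)
    {h : ℝ} (hh : 0 ≤ h) (hsmall : h * ‖v‖ ≤ r/2) :
    L (p + h • v) - L p ≤ -c * h := by
  have key : ∀ η > (0:ℝ), η ≤ r/2 → L (p + h • v) - L p ≤ -c * h + 2 * Kl * η := by
    intro η hη hηr
    set ν : Measure ℝ := volume.restrict (Icc (0:ℝ) h) with hν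
    have hDmeas : MeasurableSet {q : (EuclideanSpace ℝ (Fin n)) × ℝ |
        DifferentiableAt ℝ L (q.1 + q.2 • v)} := by
      have hcont : Continuous fun q : (EuclideanSpace ℝ (Fin n)) × ℝ => q.1 + q.2 • v :=
        continuous_fst.add (continuous_snd.smul continuous_const)
      exact (measurableSet_of_differentiableAt ℝ L).preimage hcont.measurable
    have hae : ∀ᵐ a ∂(volume : Measure (EuclideanSpace ℝ (Fin n))), ∀ᵐ s ∂ν,
        DifferentiableAt ℝ L (a + s • v) := by
      rw [Measure.ae_ae_comm hDmeas]
      refine Eventually.of_forall fun s => ?_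
      have h0 : ∀ᵐ z ∂(volume : Measure (EuclideanSpace ℝ (Fin n))), DifferentiableAt ℝ L z :=
        hL.ae_differentiableAt
      rw [MeasureTheory.ae_iff] at h0 ⊢
      have : {a : EuclideanSpace ℝ (Fin n) | ¬DifferentiableAt ℝ L (a + s • v)} =
          (fun a : EuclideanSpace ℝ (Fin n) => a + s • v) ⁻¹' {z | ¬DifferentiableAt ℝ L z} := rfl
      rw [this, measure_preimage_add_right]
      exact h0
    obtain ⟨a, haball, hadiff⟩ : ∃ a ∈ ball p η, ∀ᵐ s ∂ν, DifferentiableAt ℝ L (a + s • v) := by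
      by_contra hcon
      push_neg at hcon
      have hsub : ball p η ⊆ {a : EuclideanSpace ℝ (Fin n) |
          ¬ ∀ᵐ s ∂ν, DifferentiableAt ℝ L (a + s • v)} := fun a ha => Filter.not_eventually.2 (hcon a ha)
      have h1 : volume {a : EuclideanSpace ℝ (Fin n) |
          ¬ ∀ᵐ s ∂ν, DifferentiableAt ℝ L (a + s • v)} = 0 := by
        rw [← MeasureTheory.ae_iff]; exact hae
      have h2 : volume (ball p η) = 0 := le_antisymm (h1 ▸ measure_mono hsub) (by positivity)
      exact absurd h2 (measure_ball_pos volume p hη).ne'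
    set φ : ℝ → ℝ := fun s => L (a + s • v) with hφdef
    have hinner : LipschitzWith ‖v‖₊ (fun s : ℝ => a + s • v) := by
      apply LipschitzWith.of_dist_le_mul
      intro s s'
      rw [dist_eq_norm, dist_eq_norm]
      have : a + s • v - (a + s' • v) = (s - s') • v := by module
      rw [this, norm_smul]
      simp [mul_comm]
    have hφlip : LipschitzWith (Kl * ‖v‖₊) φ := hL.comp hinner
    have hφae : ∀ᵐ s ∂ν, ∃ d, HasDerivAt φ d s ∧ d ≤ -c := by
      filter_upwards [hadiff, ae_restrict_mem measurableSet_Icc] with s hdiff hs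
      set z := a + s • v with hz
      have hder_inner : HasDerivAt (fun s : ℝ => a + s • v) v s := by
        simpa using ((hasDerivAt_id s).smul_const v).const_add a
      have hder : HasDerivAt φ (fderiv ℝ L z v) s :=
        hdiff.hasFDerivAt.comp_hasDerivAt s hder_inner
      refine ⟨_, hder, ?_⟩
      have hdist : ‖p - z‖ ≤ r := by
        have h3 : p - z = (p - a) - s • v := by rw [hz]; abel
        have h4 : ‖p - z‖ ≤ ‖p - a‖ + ‖s • v‖ := by rw [h3]; exact norm_sub_le _ _
        have h5 : ‖s • v‖ = s * ‖v‖ := by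
          rw [norm_smul, Real.norm_eq_abs, abs_of_nonneg hs.1]
        have h6 : s * ‖v‖ ≤ h * ‖v‖ := mul_le_mul_of_nonneg_right hs.2 (norm_nonneg v)
        have h7 : ‖p - a‖ < η := by rw [← dist_eq_norm, dist_comm]; exact mem_ball.1 haball
        linarith
      have := hgrad z hdist hdiff
      rw [← grad_inner hdiff, real_inner_comm]
      exact this
    have hdecay : φ h - φ 0 ≤ -c * h := oneDim_decay hφlip hh hφae
    have hL1 : |L (p + h • v) - φ h| ≤ (Kl:ℝ) * η := by
      have := hL.dist_le_mul (p + h • v) (a + h • v)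
      rw [Real.dist_eq, dist_eq_norm] at this
      have h8 : p + h • v - (a + h • v) = p - a := by abel
      rw [h8] at this
      have h7 : ‖p - a‖ ≤ η := by
        rw [← dist_eq_norm, dist_comm]; exact (mem_ball.1 haball).le
      exact this.trans (mul_le_mul_of_nonneg_left h7 Kl.coe_nonneg)
    have hL2 : |φ 0 - L p| ≤ (Kl:ℝ) * η := by
      have := hL.dist_le_mul (a + (0:ℝ) • v) p
      rw [Real.dist_eq, dist_eq_norm] at this
      have h8 : a + (0:ℝ) • v - p = -(p - a) := by
        rw [zero_smul, add_zero]; abel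
      rw [h8, norm_neg] at this
      have h7 : ‖p - a‖ ≤ η := by
        rw [← dist_eq_norm, dist_comm]; exact (mem_ball.1 haball).le
      exact this.trans (mul_le_mul_of_nonneg_left h7 Kl.coe_nonneg)
    have e1 := abs_le.1 hL1
    have e2 := abs_le.1 hL2
    have : φ 0 = L (a + (0:ℝ) • v) := rfl
    rw [this] at e2
    linarith [e1.2, e2.2]
  refine le_of_forall_pos_le_add fun ε hε => ?_
  set η := min (r/2) (ε / (2 * Kl + 1)) with hηdef
  have hηpos : 0 < η := lt_min (by linarith) (div_pos hε (by positivity))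
  have h9 := key η hηpos (min_le_left _ _)
  have h10 : 2 * (Kl:ℝ) * η ≤ ε := by
    have h11 : η ≤ ε / (2 * Kl + 1) := min_le_right _ _
    have h12 : (0:ℝ) < 2 * Kl + 1 := by positivity
    rw [le_div_iff₀ h12] at h11
    nlinarith [Kl.coe_nonneg, hηpos.le]
  linarith

theorem hasDerivWithinAt_singleton' {E : Type*} [NormedAddCommGroup E] [NormedSpace ℝ E]
    (f : ℝ → E) (x : ℝ) (d : E) : HasDerivWithinAt f d {x} x := by
  rw [hasDerivWithinAt_iff_isLittleO, nhdsWithin_singleton]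
  simp [Asymptotics.isLittleO_pure]

theorem global_solution {n : ℕ} {f : EuclideanSpace ℝ (Fin n) → EuclideanSpace ℝ (Fin n)}
    {Kf : NNReal} (hf : LipschitzWith Kf f) (w : EuclideanSpace ℝ (Fin n)) :
    ∃ y : ℝ → EuclideanSpace ℝ (Fin n), y 0 = w ∧ ∀ t : ℝ, 0 ≤ t → HasDerivAt y (f (y t)) t := by
  set A : ℝ := ‖f 0‖ with hA
  have hA0 : 0 ≤ A := norm_nonneg _
  set τ : ℝ := 1 / (A + 2 * Kf + 1) with hτ
  have hdenom : (0:ℝ) < A + 2 * Kf + 1 := by positivity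
  have hτpos : 0 < τ := by positivity
  have local_ex : ∀ (w' : EuclideanSpace ℝ (Fin n)) (b : ℝ), ∃ z : ℝ → EuclideanSpace ℝ (Fin n),
      z b = w' ∧ ∀ t ∈ Icc b (b + τ), HasDerivWithinAt z (f (z t)) (Icc b (b + τ)) t := by
    intro w' b
    have hpl : IsPicardLindelof (fun _ : ℝ => f) (⟨b, le_rfl, by linarith⟩ : Icc b (b + τ)) w'
        (‖w'‖₊ + 1) 0 ⟨A + Kf * (2 * ‖w'‖ + 1), by positivity⟩ Kf := by
      refine IsPicardLindelof.of_time_independent ?_ hf.lipschitzOnWith ?_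
      · intro z hz
        show ‖f z‖ ≤ A + Kf * (2 * ‖w'‖ + 1)
        have h1 : ‖f z - f 0‖ ≤ Kf * ‖z‖ := by
          have := hf.dist_le_mul z 0
          rwa [dist_eq_norm, dist_eq_norm, sub_zero] at this
        have h2 : ‖f z‖ ≤ A + ‖f z - f 0‖ := by
          have h3 : f z = f 0 + (f z - f 0) := by abel
          calc ‖f z‖ = ‖f 0 + (f z - f 0)‖ := by rw [← h3]
            _ ≤ A + ‖f z - f 0‖ := norm_add_le _ _
        have h4 : ‖z‖ ≤ 2 * ‖w'‖ + 1 := by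
          have h5 : ‖z - w'‖ ≤ ‖w'‖ + 1 := by simpa using mem_closedBall_iff_norm.1 hz
          have h6 : ‖z‖ ≤ ‖z - w'‖ + ‖w'‖ := by
            calc ‖z‖ = ‖z - w' + w'‖ := by rw [sub_add_cancel]
              _ ≤ ‖z - w'‖ + ‖w'‖ := norm_add_le _ _
          linarith
        have h7 : (Kf:ℝ) * ‖z‖ ≤ Kf * (2 * ‖w'‖ + 1) :=
          mul_le_mul_of_nonneg_left h4 Kf.coe_nonneg
        linarith
      · show (A + Kf * (2 * ‖w'‖ + 1)) * max (b + τ - b) (b - b) ≤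
          ((‖w'‖₊ + 1 : NNReal) : ℝ) - ((0 : NNReal) : ℝ)
        have hmax : max (b + τ - b) (b - b) = τ := by
          rw [add_sub_cancel_left, sub_self, max_eq_left hτpos.le]
        simp only [NNReal.coe_add, coe_nnnorm, NNReal.coe_one, NNReal.coe_zero, sub_zero]
        rw [hmax, hτ, mul_one_div, div_le_iff₀ hdenom]
        nlinarith [norm_nonneg w', Kf.coe_nonneg]
    exact hpl.exists_eq_forall_mem_Icc_hasDerivWithinAt₀
  -- solutions on [0, k*τ]
  have piece : ∀ k : ℕ, ∃ y : ℝ → EuclideanSpace ℝ (Fin n), y 0 = w ∧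
      ∀ t ∈ Icc (0:ℝ) (k * τ), HasDerivWithinAt y (f (y t)) (Icc (0:ℝ) (k * τ)) t := by
    intro k
    induction k with
    | zero =>
      refine ⟨fun _ => w, rfl, ?_⟩
      intro t ht
      simp only [Nat.cast_zero, zero_mul] at ht ⊢
      rw [Set.Icc_self] at ht ⊢
      rw [Set.mem_singleton_iff] at ht
      subst ht
      exact hasDerivWithinAt_singleton' _ _ _
    | succ k ih =>
      obtain ⟨y, hy0, hyd⟩ := ih
      set b : ℝ := k * τ with hb
      have hb0 : 0 ≤ b := by positivity
      obtain ⟨z, hzb, hzd⟩ := local_ex (y b) b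
      have hb1 : b + τ = ((k:ℝ) + 1) * τ := by ring
      set Y : ℝ → EuclideanSpace ℝ (Fin n) := fun t => if t ≤ b then y t else z t with hY
      have hYeqy : ∀ u ∈ Icc (0:ℝ) b, Y u = y u := fun u hu => if_pos hu.2
      have hYeqz : ∀ u ∈ Icc b (b + τ), Y u = z u := by
        intro u hu
        rcases lt_or_eq_of_le hu.1 with hlt | heq
        · exact if_neg (not_le.2 hlt)
        · rw [hY]; simp only [← heq, le_refl, if_pos, hzb]
      refine ⟨Y, ?_, ?_⟩
      · rw [hYeqy 0 ⟨le_rfl, hb0⟩, hy0]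
      · intro t ht
        push_cast at ht
        rw [← hb1] at ht
        have hcc : Icc (0:ℝ) (((k:ℝ)+1) * τ) = Icc 0 b ∪ Icc b (b + τ) := by
          rw [Set.Icc_union_Icc_eq_Icc hb0 (by linarith), hb1]
        push_cast
        rw [hcc]
        rcases lt_trichotomy t b with hlt | heq | hgt
        · have h1 : HasDerivWithinAt Y (f (y t)) (Icc 0 b) t :=
            (hyd t ⟨ht.1, hlt.le⟩).congr hYeqy (hYeqy t ⟨ht.1, hlt.le⟩)
          have h2 : Icc (0:ℝ) b ∈ 𝓝[Icc 0 b ∪ Icc b (b+τ)] t := by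
            apply mem_nhdsWithin.2 ⟨Iio b, isOpen_Iio, hlt, ?_⟩
            rintro u ⟨hu1, hu2⟩
            rcases hu2 with h | h
            · exact h
            · exact absurd h.1 (not_le.2 hu1)
          have h3 := h1.mono_of_mem_nhdsWithin h2
          rwa [← hYeqy t ⟨ht.1, hlt.le⟩] at h3
        · have hYb : Y b = y b := hYeqy b ⟨hb0, le_rfl⟩
          have h1 : HasDerivWithinAt Y (f (Y b)) (Icc 0 b) b := by
            rw [hYb]
            exact (hyd b ⟨hb0, le_rfl⟩).congr hYeqy (hYeqy b ⟨hb0, le_rfl⟩)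
          have h2 : HasDerivWithinAt Y (f (Y b)) (Icc b (b + τ)) b := by
            have hval : f (z b) = f (Y b) := by rw [hzb, hYb]
            rw [← hval]
            exact (hzd b ⟨le_rfl, by linarith⟩).congr hYeqz (hYeqz b ⟨le_rfl, by linarith⟩)
          rw [heq]
          exact h1.union h2
        · have htmem : t ∈ Icc b (b + τ) := ⟨hgt.le, ht.2⟩
          have h1 : HasDerivWithinAt Y (f (z t)) (Icc b (b+τ)) t :=
            (hzd t htmem).congr hYeqz (hYeqz t htmem)
          have h2 : Icc b (b+τ) ∈ 𝓝[Icc 0 b ∪ Icc b (b+τ)] t := by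
            apply mem_nhdsWithin.2 ⟨Ioi b, isOpen_Ioi, hgt, ?_⟩
            rintro u ⟨hu1, hu2⟩
            rcases hu2 with h | h
            · exact absurd h.2 (not_le.2 hu1)
            · exact h
          have h3 := h1.mono_of_mem_nhdsWithin h2
          rwa [← hYeqz t htmem] at h3
  choose Y hY0 hYd using piece
  have ici : ∀ (m : ℕ) (t : ℝ), t ∈ Ico (0:ℝ) ((m:ℝ) * τ) →
      HasDerivWithinAt (Y m) (f (Y m t)) (Ici t) t := by
    intro m t ht
    apply (hYd m t ⟨ht.1, ht.2.le⟩).mono_of_mem_nhdsWithin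
    apply mem_nhdsWithin.2 ⟨Iio ((m:ℝ) * τ), isOpen_Iio, ht.2, ?_⟩
    rintro u ⟨hu1, hu2⟩
    exact ⟨le_trans ht.1 hu2, le_of_lt hu1⟩
  have huniq : ∀ (j k : ℕ) (t : ℝ), t ∈ Icc (0:ℝ) (j * τ) → t ∈ Icc (0:ℝ) (k * τ) →
      Y j t = Y k t := by
    intro j k t htj htk
    wlog hjk : (j:ℝ) * τ ≤ (k:ℝ) * τ generalizing j k with H
    · exact (H k j htk htj (le_of_not_ge hjk)).symm
    have hcontj : ContinuousOn (Y j) (Icc (0:ℝ) ((j:ℝ)*τ)) :=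
      fun u hu => ((hYd j u hu).continuousWithinAt)
    have hcontk : ContinuousOn (Y k) (Icc (0:ℝ) ((j:ℝ)*τ)) := by
      intro u hu
      exact ((hYd k u ⟨hu.1, hu.2.trans hjk⟩).continuousWithinAt).mono
        (Icc_subset_Icc le_rfl hjk)
    have := ODE_solution_unique (v := fun _ z => f z) (K := Kf) (f := Y j) (g := Y k)
      (fun _ => hf) hcontj (fun u hu => ici j u hu) hcontk
      (fun u hu => ici k u ⟨hu.1, lt_of_lt_of_le hu.2 hjk⟩) (by rw [hY0, hY0])
    exact this htj
  set yg : ℝ → EuclideanSpace ℝ (Fin n) := fun t => if t < 0 then w + t • f w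
    else Y (⌊t/τ⌋₊ + 1) t with hyg_def
  have hmem : ∀ u : ℝ, 0 ≤ u → u ∈ Icc (0:ℝ) (((⌊u/τ⌋₊ + 1 : ℕ) : ℝ) * τ) := by
    intro u hu
    refine ⟨hu, ?_⟩
    push_cast
    have h1 : u / τ < ⌊u/τ⌋₊ + 1 := Nat.lt_floor_add_one (u/τ)
    have := (div_lt_iff₀ hτpos).1 h1
    linarith
  have hyg : ∀ u : ℝ, 0 ≤ u → ∀ m : ℕ, u ≤ (m:ℝ) * τ → yg u = Y m u := by
    intro u hu m hm
    show (if u < 0 then w + u • f w else Y (⌊u/τ⌋₊ + 1) u) = Y m u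
    rw [if_neg (not_lt.2 hu)]
    exact huniq _ m u (hmem u hu) ⟨hu, hm⟩
  have hyg0 : yg 0 = w := by
    rw [hyg 0 le_rfl 1 (by push_cast; linarith), hY0]
  refine ⟨yg, hyg0, ?_⟩
  intro t ht
  rcases eq_or_lt_of_le ht with heq | hpos
  · -- t = 0
    have hleft : HasDerivWithinAt yg (f w) (Iic (0:ℝ)) 0 := by
      have hg : HasDerivAt (fun u : ℝ => w + u • f w) (f w) 0 := by
        simpa using ((hasDerivAt_id (0:ℝ)).smul_const (f w)).const_add w
      refine (hg.hasDerivWithinAt).congr ?_ ?_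
      · intro u hu
        rcases lt_or_eq_of_le (mem_Iic.1 hu) with hlt | hequ
        · exact if_pos hlt
        · rw [hequ, hyg0]; simp
      · rw [hyg0]; simp
    have hright : HasDerivWithinAt yg (f w) (Ici (0:ℝ)) 0 := by
      have h1 : HasDerivWithinAt (Y 1) (f (Y 1 0)) (Icc (0:ℝ) ((1:ℕ) * τ)) 0 :=
        hYd 1 0 ⟨le_rfl, by push_cast; linarith⟩
      rw [hY0] at h1
      have h2 : HasDerivWithinAt yg (f w) (Icc (0:ℝ) ((1:ℕ) * τ)) 0 := by
        refine h1.congr ?_ ?_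
        · intro u hu
          exact hyg u hu.1 1 hu.2
        · exact hyg0.trans (hY0 1).symm
      apply h2.mono_of_mem_nhdsWithin
      apply mem_nhdsWithin.2 ⟨Iio (((1:ℕ):ℝ) * τ), isOpen_Iio, by rw [Set.mem_Iio]; push_cast; linarith, ?_⟩
      rintro u ⟨hu1, hu2⟩
      exact ⟨hu2, le_of_lt hu1⟩
    have := hleft.union hright
    rw [Set.Iic_union_Ici, hasDerivWithinAt_univ] at this
    rw [← heq, hyg0]
    exact this
  · -- 0 < t
    set k := ⌊t/τ⌋₊ + 1 with hk
    have htk : t < (k:ℝ) * τ := by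
      have h1 : t / τ < ⌊t/τ⌋₊ + 1 := Nat.lt_floor_add_one (t/τ)
      have := (div_lt_iff₀ hτpos).1 h1
      rw [hk]; push_cast
      linarith
    have h1 : HasDerivAt (Y k) (f (Y k t)) t :=
      (hYd k t ⟨ht, htk.le⟩).hasDerivAt (Icc_mem_nhds hpos htk)
    have heqev : yg =ᶠ[𝓝 t] Y k := by
      filter_upwards [Ioo_mem_nhds hpos htk] with u hu
      exact hyg u hu.1.le k hu.2.le
    have h2 := h1.congr_of_eventuallyEq heqev
    have h3 : yg t = Y k t := hyg t ht k htk.le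
    rw [h3]
    exact h2

theorem uniform_decay {n : ℕ} {X Xs : Set (EuclideanSpace ℝ (Fin n))} (hX : IsCompact X)
    {f : EuclideanSpace ℝ (Fin n) → EuclideanSpace ℝ (Fin n)} {Kf : NNReal}
    (hf : LipschitzWith Kf f) {L : EuclideanSpace ℝ (Fin n) → ℝ} {Kl : NNReal}
    (hL : LipschitzWith Kl L)
    (hdec : ∀ x ∈ X \ Xs, ∀ y ∈ ClarkeGradient L x, (inner ℝ (f x) y : ℝ) < 0)
    {ε' : ℝ} (hε' : 0 < ε') :
    ∃ c > (0:ℝ), ∃ r > (0:ℝ), ∀ p ∈ X, ε' ≤ infDist p Xs →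
      ∀ z, ‖p - z‖ ≤ r → DifferentiableAt ℝ L z → (inner ℝ (f p) (gradient L z) : ℝ) ≤ -c := by
  by_contra hcon
  push_neg at hcon
  have hseq : ∀ k : ℕ, ∃ p z, p ∈ X ∧ ε' ≤ infDist p Xs ∧ ‖p - z‖ ≤ 1/((k:ℝ)+1) ∧
      DifferentiableAt ℝ L z ∧ -(1/((k:ℝ)+1)) < (inner ℝ (f p) (gradient L z) : ℝ) := by
    intro k
    have hk : (0:ℝ) < 1/((k:ℝ)+1) := by positivity
    obtain ⟨p, hpX, hpd, z, hz1, hz2, hz3⟩ := hcon (1/((k:ℝ)+1)) hk (1/((k:ℝ)+1)) hk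
    exact ⟨p, z, hpX, hpd, hz1, hz2, hz3⟩
  choose P Z h1 h2 h3 h4 h5 using hseq
  obtain ⟨q, hqX, σ1, hσ1, hσ1t⟩ := hX.tendsto_subseq h1
  have hYball : ∀ m : ℕ, gradient L (Z (σ1 m)) ∈ closedBall (0 : EuclideanSpace ℝ (Fin n)) Kl :=
    fun m => mem_closedBall_zero_iff.2 (grad_norm_le hL (h4 (σ1 m)))
  obtain ⟨ww, hww, σ2, hσ2, hσ2t⟩ := (isCompact_closedBall (0 : EuclideanSpace ℝ (Fin n)) Kl).tendsto_subseq hYball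
  set σ : ℕ → ℕ := σ1 ∘ σ2 with hσdef
  have hσmono : StrictMono σ := hσ1.comp hσ2
  have hPq : Tendsto (fun m => P (σ m)) atTop (𝓝 q) := hσ1t.comp hσ2.tendsto_atTop
  have hrecip : Tendsto (fun m : ℕ => 1/((m:ℝ)+1)) atTop (𝓝 0) := by
    exact tendsto_one_div_add_atTop_nhds_zero_nat
  have hbound : ∀ m : ℕ, ‖P (σ m) - Z (σ m)‖ ≤ 1/((m:ℝ)+1) := by
    intro m
    refine (h3 (σ m)).trans ?_
    have : (m:ℝ) + 1 ≤ (σ m : ℝ) + 1 := by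
      exact_mod_cast Nat.add_le_add_right hσmono.le_apply 1
    exact one_div_le_one_div_of_le (by positivity) this
  have hZq : Tendsto (fun m => Z (σ m)) atTop (𝓝 q) := by
    rw [tendsto_iff_dist_tendsto_zero]
    have hle : ∀ m, dist (Z (σ m)) q ≤ 1/((m:ℝ)+1) + dist (P (σ m)) q := by
      intro m
      calc dist (Z (σ m)) q ≤ dist (Z (σ m)) (P (σ m)) + dist (P (σ m)) q := dist_triangle _ _ _
        _ ≤ 1/((m:ℝ)+1) + dist (P (σ m)) q := by
            have he : dist (Z (σ m)) (P (σ m)) = ‖P (σ m) - Z (σ m)‖ := by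
              rw [dist_comm, dist_eq_norm]
            rw [he]
            linarith [hbound m]
    have hlim : Tendsto (fun m : ℕ => 1/((m:ℝ)+1) + dist (P (σ m)) q) atTop (𝓝 0) := by
      simpa using hrecip.add (tendsto_iff_dist_tendsto_zero.1 hPq)
    exact squeeze_zero (fun m => dist_nonneg) hle hlim
  have hYw : Tendsto (fun m => gradient L (Z (σ m))) atTop (𝓝 ww) := hσ2t
  have hwmem : ww ∈ {y : EuclideanSpace ℝ (Fin n) | ∀ ε > (0:ℝ), ∃ z, ‖q - z‖ < ε ∧
      DifferentiableAt ℝ L z ∧ ‖y - gradient L z‖ < ε} := by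
    intro ε hε
    have e1 : ∀ᶠ m in atTop, Z (σ m) ∈ ball q ε := hZq (ball_mem_nhds q hε)
    have e2 : ∀ᶠ m in atTop, gradient L (Z (σ m)) ∈ ball ww ε := hYw (ball_mem_nhds ww hε)
    obtain ⟨m, hm1, hm2⟩ := (e1.and e2).exists
    refine ⟨Z (σ m), ?_, h4 (σ m), ?_⟩
    · rw [← dist_eq_norm, dist_comm]
      exact mem_ball.1 hm1
    · rw [← dist_eq_norm, dist_comm]
      exact mem_ball.1 hm2
  have hqXs : q ∉ Xs := by
    intro hmem
    have h6 : Tendsto (fun m => infDist (P (σ m)) Xs) atTop (𝓝 (infDist q Xs)) :=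
      ((continuous_infDist_pt Xs).tendsto q).comp hPq
    have h7 : ε' ≤ infDist q Xs :=
      le_of_tendsto_of_tendsto' tendsto_const_nhds h6 (fun m => h2 (σ m))
    rw [infDist_zero_of_mem hmem] at h7
    linarith
  have hneg := hdec q ⟨hqX, hqXs⟩ ww (subset_convexHull ℝ _ hwmem)
  have hinner : Tendsto (fun m => (inner ℝ (f (P (σ m))) (gradient L (Z (σ m))) : ℝ)) atTop
      (𝓝 (inner ℝ (f q) ww : ℝ)) :=
    ((hf.continuous.tendsto q).comp hPq).inner hYw
  have hlower : ∀ m : ℕ, -(1/((m:ℝ)+1)) ≤ (inner ℝ (f (P (σ m))) (gradient L (Z (σ m))) : ℝ) := by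
    intro m
    have h10 := h5 (σ m)
    have h8 : 1/((σ m : ℝ)+1) ≤ 1/((m:ℝ)+1) := by
      apply one_div_le_one_div_of_le (by positivity)
      exact_mod_cast Nat.add_le_add_right hσmono.le_apply 1
    linarith
  have h9 : (0:ℝ) ≤ (inner ℝ (f q) ww : ℝ) :=
    le_of_tendsto_of_tendsto' (by simpa using hrecip.neg) hinner hlower
  linarith

theorem reach {n : ℕ} {X Xs : Set (EuclideanSpace ℝ (Fin n))} (hX : IsCompact X)
    {f : EuclideanSpace ℝ (Fin n) → EuclideanSpace ℝ (Fin n)} {Kf : NNReal}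
    (hf : LipschitzWith Kf f) {L : EuclideanSpace ℝ (Fin n) → ℝ} {Kl : NNReal}
    (hL : LipschitzWith Kl L) {α : ℝ} (hlev : X = {x | L x ≤ α})
    (hdec : ∀ x ∈ X \ Xs, ∀ y ∈ ClarkeGradient L x, (inner ℝ (f x) y : ℝ) < 0)
    {ε' : ℝ} (hε' : 0 < ε') {x : ℝ → EuclideanSpace ℝ (Fin n)}
    (hx0 : x 0 ∈ X) (hxd : ∀ t : ℝ, 0 ≤ t → HasDerivAt x (f (x t)) t) :
    ∃ T : ℝ, 0 ≤ T ∧ infDist (x T) Xs < ε' := by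
  by_contra hcon
  push_neg at hcon
  obtain ⟨c, hc, r, hr, hA⟩ := uniform_decay hX hf hL hdec hε'
  obtain ⟨R, hR⟩ := hX.isBounded.subset_closedBall 0
  have hR0 : 0 ≤ R := le_trans (norm_nonneg (x 0)) (mem_closedBall_zero_iff.1 (hR hx0))
  set Mf : ℝ := Kf * R + ‖f 0‖ with hMf
  have hMf0 : 0 ≤ Mf := add_nonneg (mul_nonneg Kf.coe_nonneg hR0) (norm_nonneg _)
  have hfb : ∀ z ∈ X, ‖f z‖ ≤ Mf := by
    intro z hz
    have h1 : ‖f z - f 0‖ ≤ Kf * ‖z‖ := by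
      have := hf.dist_le_mul z 0
      rwa [dist_eq_norm, dist_eq_norm, sub_zero] at this
    have h2 : ‖z‖ ≤ R := mem_closedBall_zero_iff.1 (hR hz)
    have h3 : ‖f z‖ ≤ ‖f z - f 0‖ + ‖f 0‖ := by
      calc ‖f z‖ = ‖f z - f 0 + f 0‖ := by rw [sub_add_cancel]
        _ ≤ ‖f z - f 0‖ + ‖f 0‖ := norm_add_le _ _
    have h4 : (Kf:ℝ) * ‖z‖ ≤ Kf * R := mul_le_mul_of_nonneg_left h2 Kf.coe_nonneg
    rw [hMf]; linarith
  have hLx0 : L (x 0) ≤ α := by rw [hlev] at hx0; exact hx0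
  obtain ⟨zm, hzmX, hzm⟩ := hX.exists_isMinOn ⟨x 0, hx0⟩ hL.continuous.continuousOn
  set B : ℝ := L zm with hB
  have main : ∀ T : ℝ, 0 ≤ T → L (x T) + (c/2) * T ≤ L (x 0) := by
    intro T hT
    set s : Set ℝ := (fun t => L (x t) + (c/2) * t) ⁻¹' Iic (L (x 0)) with hs
    have hcl : IsClosed (s ∩ Icc 0 T) := by
      have hFcont : ContinuousOn (fun t => L (x t) + (c/2)*t) (Icc 0 T) := by
        intro u hu
        have hxc : ContinuousAt x u := (hxd u hu.1).continuousAt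
        exact ((hL.continuous.continuousAt.comp hxc).add
          (continuousAt_const.mul continuousAt_id)).continuousWithinAt
      rw [Set.inter_comm]
      exact hFcont.preimage_isClosed_of_isClosed isClosed_Icc isClosed_Iic
    have h0s : (0:ℝ) ∈ s := by simp [hs]
    have hext : ∀ t ∈ s ∩ Ico 0 T, ∀ y ∈ Ioi t, (s ∩ Ioc t y).Nonempty := by
      rintro t ⟨hts, ht0, htT⟩ y hy
      have hts' : L (x t) + (c/2)*t ≤ L (x 0) := hts
      have hxtX : x t ∈ X := by
        rw [hlev]
        show L (x t) ≤ α
        nlinarith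
      have hfar := hcon t ht0
      have hApz := hA (x t) hxtX hfar
      set κ : ℝ := c/(2*((Kl:ℝ)+1)) with hκ
      have hκpos : 0 < κ := by positivity
      have hκid : κ * (2*((Kl:ℝ)+1)) = c := div_mul_cancel₀ _ (by positivity)
      set h₀ : ℝ := r/(2*(Mf+1)) with hh₀
      have hh₀pos : 0 < h₀ := by positivity
      have hh₀id : h₀ * (2*(Mf+1)) = r := div_mul_cancel₀ _ (by positivity)
      have hder := hxd t ht0
      have hlo : ∀ᶠ u in 𝓝 t, ‖x u - x t - (u - t) • f (x t)‖ ≤ κ * ‖u - t‖ :=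
        (hasDerivAt_iff_isLittleO.1 hder).def hκpos
      have E1 : ∀ᶠ u in 𝓝[>] t, ‖x u - x t - (u - t) • f (x t)‖ ≤ κ * ‖u - t‖ :=
        hlo.filter_mono nhdsWithin_le_nhds
      have E2 : Ioc t (min y (t + h₀)) ∈ 𝓝[>] t :=
        Ioc_mem_nhdsGT_of_mem ⟨le_rfl, lt_min hy (by linarith)⟩
      obtain ⟨u, hu1, hu2⟩ := (E1.and (eventually_of_mem E2 (fun _ hm => hm))).exists
      set hstep : ℝ := u - t with hhstep
      have hpos : 0 < hstep := by simp [hhstep]; linarith [hu2.1]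
      have hle : hstep ≤ h₀ := by
        have := hu2.2.trans (min_le_right _ _)
        simp [hhstep]; linarith
      have hvMf : ‖f (x t)‖ ≤ Mf := hfb (x t) hxtX
      have hsmall : hstep * ‖f (x t)‖ ≤ r/2 := by
        have h5 : hstep * ‖f (x t)‖ ≤ h₀ * Mf :=
          mul_le_mul hle hvMf (norm_nonneg _) hh₀pos.le
        nlinarith
      have hsd := space_decay hL hr hApz hpos.le hsmall
      have hxub : ‖x u - (x t + hstep • f (x t))‖ ≤ κ * hstep := by
        have h6 : x u - (x t + hstep • f (x t)) = x u - x t - (u - t) • f (x t) := by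
          rw [hhstep]; abel
        rw [h6]
        have h7 : ‖(u:ℝ) - t‖ = hstep := by
          rw [Real.norm_eq_abs, abs_of_pos (by linarith [hu2.1] : (0:ℝ) < u - t)]
        rw [← h7] at *
        exact hu1
      have hLu : L (x u) - L (x t + hstep • f (x t)) ≤ (Kl:ℝ) * (κ * hstep) := by
        have := hL.dist_le_mul (x u) (x t + hstep • f (x t))
        rw [Real.dist_eq, dist_eq_norm] at this
        have h8 := le_abs_self (L (x u) - L (x t + hstep • f (x t)))
        have h9 : (Kl:ℝ) * ‖x u - (x t + hstep • f (x t))‖ ≤ (Kl:ℝ) * (κ * hstep) :=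
          mul_le_mul_of_nonneg_left hxub Kl.coe_nonneg
        linarith
      have hKlκ : (Kl:ℝ) * κ ≤ c/2 := by nlinarith [Kl.coe_nonneg]
      refine ⟨u, ?_, hu2.1, hu2.2.trans (min_le_left _ _)⟩
      show L (x u) + (c/2) * u ≤ L (x 0)
      nlinarith
    exact hcl.Icc_subset_of_forall_exists_gt h0s hext ⟨hT, le_rfl⟩
  have hBle : B ≤ α := by rw [hlev] at hzmX; exact le_trans (isMinOn_iff.1 hzm (x 0) hx0) hLx0
  set T : ℝ := (2/c) * (L (x 0) - B + 1) with hT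
  have hLB : B ≤ L (x 0) := isMinOn_iff.1 hzm (x 0) hx0
  have hTpos : 0 ≤ T := by
    rw [hT]
    apply mul_nonneg (by positivity) (by linarith)
  have hmain := main T hTpos
  have hxTX : x T ∈ X := by
    rw [hlev]
    show L (x T) ≤ α
    nlinarith
  have hBxT : B ≤ L (x T) := isMinOn_iff.1 hzm (x T) hxTX
  have hc0 : c ≠ 0 := ne_of_gt hc
  have hTid : (c/2) * T = L (x 0) - B + 1 := by
    rw [hT, ← mul_assoc, div_mul_div_comm, mul_comm c 2, div_self (mul_pos two_pos hc).ne', one_mul]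
  linarith

/-- Lyapunov inference, Theorem 1. -/
theorem lyapunov_inference {n : ℕ}
    (X Xs : Set (EuclideanSpace ℝ (Fin n)))
    (hX : IsCompact X) (hXs : IsCompact Xs) (hXsX : Xs ⊆ X) (h0 : (0 : EuclideanSpace ℝ (Fin n)) ∈ Xs)
    (f : EuclideanSpace ℝ (Fin n) → EuclideanSpace ℝ (Fin n))
    (hf : ∃ K : NNReal, LipschitzWith K f)
    (hprior : StabilityPrior f Xs)
    (L : EuclideanSpace ℝ (Fin n) → ℝ)
    (hL : ∃ K : NNReal, LipschitzWith K L)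
    (α : ℝ) (hlev : X = {x | L x ≤ α})
    (hdec : ∀ x ∈ X \ Xs, ∀ y ∈ ClarkeGradient L x, (inner ℝ (f x) y : ℝ) < 0) :
    ∀ x₀ ∈ interior X, ∀ x : ℝ → EuclideanSpace ℝ (Fin n),
      IsSolution f x₀ x → Tendsto x atTop (nhds 0) := by
  obtain ⟨Kf, hf⟩ := hf
  obtain ⟨Kl, hL⟩ := hL
  obtain ⟨hf0, ⟨δ, hδ, hδconv⟩, hXsconv⟩ := hprior
  intro x₀ hx₀ x hsol
  obtain ⟨hx0eq, hxd⟩ := hsol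
  -- Step E: a uniform attraction neighborhood of each point of Xs
  have hkey : ∀ p ∈ Xs, ∃ η > (0:ℝ), ∀ w : EuclideanSpace ℝ (Fin n), dist w p < η →
      ∀ z : ℝ → EuclideanSpace ℝ (Fin n), z 0 = w →
      (∀ t : ℝ, 0 ≤ t → HasDerivAt z (f (z t)) t) → ∃ T' : ℝ, 0 ≤ T' ∧ ‖z T'‖ < δ := by
    intro p hp
    obtain ⟨y, hy0, hyd⟩ := global_solution hf p
    have hconv := hXsconv y (hy0 ▸ hp) hyd
    have hev : ∀ᶠ t in atTop, y t ∈ ball 0 (δ/2) := hconv (ball_mem_nhds 0 (by linarith))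
    obtain ⟨Tp, hTpmem, hTp0⟩ := (hev.and (eventually_ge_atTop (0:ℝ))).exists
    have hTpb : ‖y Tp‖ < δ/2 := by rwa [mem_ball, dist_zero_right] at hTpmem
    refine ⟨(δ/2) / Real.exp (Kf * Tp), by positivity, ?_⟩
    intro w hw z hz0 hzd
    have hgron : ∀ t ∈ Icc (0:ℝ) Tp, dist (z t) (y t) ≤ dist w p * Real.exp (Kf * (t - 0)) := by
      apply dist_le_of_trajectories_ODE (v := fun _ u => f u) (fun _ => hf)
        (fun u hu => ((hzd u hu.1).continuousAt).continuousWithinAt)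
        (fun u hu => (hzd u hu.1).hasDerivWithinAt)
        (fun u hu => ((hyd u hu.1).continuousAt).continuousWithinAt)
        (fun u hu => (hyd u hu.1).hasDerivWithinAt)
      rw [hz0, hy0]
    have h1 := hgron Tp ⟨hTp0, le_rfl⟩
    rw [sub_zero] at h1
    have h2 : dist w p * Real.exp (Kf * Tp) < δ/2 := by
      have hepos : (0:ℝ) < Real.exp (Kf * Tp) := Real.exp_pos _
      calc dist w p * Real.exp (Kf * Tp) < ((δ/2) / Real.exp (Kf * Tp)) * Real.exp (Kf * Tp) :=
            mul_lt_mul_of_pos_right hw hepos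
        _ = δ/2 := div_mul_cancel₀ _ hepos.ne'
    refine ⟨Tp, hTp0, ?_⟩
    calc ‖z Tp‖ ≤ dist (z Tp) (y Tp) + ‖y Tp‖ := by
          rw [dist_eq_norm]
          calc ‖z Tp‖ = ‖(z Tp - y Tp) + y Tp‖ := by rw [sub_add_cancel]
            _ ≤ ‖z Tp - y Tp‖ + ‖y Tp‖ := norm_add_le _ _
      _ < δ := by linarith
  choose η hηpos hηprop using hkey
  -- finite subcover of Xs by half-radius balls
  have hcover : Xs ⊆ ⋃ p : Xs, ball (p:EuclideanSpace ℝ (Fin n)) (η p p.2 / 2) := by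
    intro q hq
    exact mem_iUnion.2 ⟨⟨q, hq⟩, mem_ball_self (by linarith [hηpos q hq])⟩
  obtain ⟨t, ht⟩ := hXs.elim_finite_subcover
    (fun p : Xs => ball (p:EuclideanSpace ℝ (Fin n)) (η p p.2 / 2)) (fun _ => isOpen_ball) hcover
  have htne : t.Nonempty := by
    obtain ⟨p, hpt, _⟩ := mem_iUnion₂.1 (ht h0)
    exact ⟨p, hpt⟩
  set ε' : ℝ := t.inf' htne (fun p => η p p.2 / 2) with hε'def
  have hε'pos : 0 < ε' := by
    rw [hε'def, Finset.lt_inf'_iff]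
    exact fun p _ => by linarith [hηpos p p.2]
  have hx0X : x 0 ∈ X := hx0eq ▸ interior_subset hx₀
  obtain ⟨T, hT0, hTnear⟩ := reach hX hf hL hlev hdec hε'pos hx0X hxd
  obtain ⟨q, hqXs, hqd⟩ := (infDist_lt_iff ⟨0, h0⟩).1 hTnear
  obtain ⟨p, hpt, hqball⟩ := mem_iUnion₂.1 (ht hqXs)
  have hε'le : ε' ≤ η p p.2 / 2 := Finset.inf'_le _ hpt
  have hdistp : dist (x T) p < η p p.2 := by
    have h3 : dist q (p:EuclideanSpace ℝ (Fin n)) < η p p.2 / 2 := mem_ball.1 hqball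
    calc dist (x T) (p:EuclideanSpace ℝ (Fin n)) ≤ dist (x T) q + dist q p := dist_triangle _ _ _
      _ < η p p.2 := by linarith
  -- shifted solution from x T
  have hshift : ∀ c : ℝ, 0 ≤ c → ∀ s : ℝ, 0 ≤ s → HasDerivAt (fun u => x (c + u)) (f (x (c + s))) s := by
    intro c hc s hs
    exact (hxd (c + s) (by linarith)).comp_const_add c s
  obtain ⟨T', hT'0, hT'b⟩ := hηprop p p.2 (x T) hdistp (fun s => x (T + s)) (by simp)
    (fun s hs => hshift T hT0 s hs)
  -- final shift and the δ-clause
  have hfinal := hδconv (fun s => x ((T + T') + s)) (by simpa using hT'b)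
    (fun s hs => hshift (T + T') (by linarith) s hs)
  have hcomp : Tendsto (fun s : ℝ => s - (T + T')) atTop atTop :=
    tendsto_atTop_add_const_right atTop (-(T + T')) tendsto_id
  have := hfinal.comp hcomp
  have heq : (fun s : ℝ => x ((T + T') + (s - (T + T')))) = x := by
    funext s
    congr 1
    ring
  rwa [Function.comp_def, heq] at this
end

section
/- Let M ≥ 0, x_1,…,x_N ∈ ℝ^n, f_1,…,f_N ∈ ℝ^n, let V ⊆ ℝ^n be a finite set and C = conv(V), and let g ∈ ℝ^n. Suppose there exist g̃_1,…,g̃_N ∈ ℝ^n with Σ_{i=1}^N g̃_i = g such that for every v ∈ V: Σ_{i=1}^N (⟨g̃_i, f_i⟩ + ‖g̃_i‖·M·‖v − x_i‖) < 0. Then for every f : ℝ^n → ℝ^n satisfying ‖f(x) − f(y)‖ ≤ M‖x − y‖ for all x, y and f(x_i) = f_i for all i = 1,…,N, and for every x ∈ C, one has ⟨g, f(x)⟩ < 0. -/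
/-- tractable robust Lyapunov condition for Lipschitz dynamics,
Corollary 1. -/
theorem robust_lyapunov_condition_lipschitz {n N : ℕ}
    (M : ℝ) (hM : 0 ≤ M)
    (xd fd : Fin N → EuclideanSpace ℝ (Fin n))
    (V : Finset (EuclideanSpace ℝ (Fin n)))
    (C : Set (EuclideanSpace ℝ (Fin n)))
    (hC : C = convexHull ℝ (V : Set (EuclideanSpace ℝ (Fin n))))
    (g : EuclideanSpace ℝ (Fin n))
    (gtil : Fin N → EuclideanSpace ℝ (Fin n)) (hsum : ∑ i, gtil i = g)
    (hneg : ∀ v ∈ V, ∑ i, ((inner ℝ (gtil i) (fd i) : ℝ) + ‖gtil i‖ * M * ‖v - xd i‖) < 0) :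
    ∀ f : EuclideanSpace ℝ (Fin n) → EuclideanSpace ℝ (Fin n),
      (∀ x y, ‖f x - f y‖ ≤ M * ‖x - y‖) → (∀ i, f (xd i) = fd i) →
      ∀ x ∈ C, (inner ℝ g (f x) : ℝ) < 0 := by
  intro f hLip hfd x hx
  rw [hC] at hx
  set φ : EuclideanSpace ℝ (Fin n) → ℝ :=
    fun y => ∑ i, ((inner ℝ (gtil i) (fd i) : ℝ) + ‖gtil i‖ * M * ‖y - xd i‖) with hφ
  have hterm : ∀ i : Fin N, ConvexOn ℝ Set.univ
      (fun y : EuclideanSpace ℝ (Fin n) =>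
        (inner ℝ (gtil i) (fd i) : ℝ) + ‖gtil i‖ * M * ‖y - xd i‖) := by
    intro i
    have h1 : ConvexOn ℝ Set.univ (fun y : EuclideanSpace ℝ (Fin n) => ‖y - xd i‖) := by
      simpa [dist_eq_norm] using convexOn_dist (xd i) (convex_univ (E := EuclideanSpace ℝ (Fin n)))
    have h2 := (h1.smul (mul_nonneg (norm_nonneg (gtil i)) hM))
    have h3 := (convexOn_const (𝕜 := ℝ) ((inner ℝ (gtil i) (fd i) : ℝ)) convex_univ).add h2
    convert h3 using 2 with y
    · rfl
    simp [smul_eq_mul]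
  have hconv : ConvexOn ℝ Set.univ φ := by
    have : ∀ t : Finset (Fin N), ConvexOn ℝ Set.univ
        (fun y : EuclideanSpace ℝ (Fin n) =>
          ∑ i ∈ t, ((inner ℝ (gtil i) (fd i) : ℝ) + ‖gtil i‖ * M * ‖y - xd i‖)) := by
      intro t
      induction t using Finset.cons_induction with
      | empty => simpa using convexOn_const (0 : ℝ) convex_univ
      | cons a t ha ih =>
          simp only [Finset.sum_cons]
          exact (hterm a).add ih
    exact this Finset.univ
  have hmax : ∃ v ∈ V, φ x ≤ φ v :=
    (hconv.subset (Set.subset_univ _) (convex_convexHull ℝ _)).exists_ge_of_mem_convexHull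
      (subset_convexHull ℝ _) hx
  obtain ⟨v, hv, hle⟩ := hmax
  have hbound : (inner ℝ g (f x) : ℝ) ≤ φ x := by
    rw [← hsum, sum_inner]
    apply Finset.sum_le_sum
    intro i _
    have heq : (inner ℝ (gtil i) (f x) : ℝ)
        = inner ℝ (gtil i) (fd i) + inner ℝ (gtil i) (f x - f (xd i)) := by
      rw [inner_sub_right, hfd i]; ring
    rw [heq]
    gcongr
    calc (inner ℝ (gtil i) (f x - f (xd i)) : ℝ)
        ≤ ‖gtil i‖ * ‖f x - f (xd i)‖ := real_inner_le_norm _ _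
      _ ≤ ‖gtil i‖ * (M * ‖x - xd i‖) := by
          gcongr; exact hLip x (xd i)
      _ = ‖gtil i‖ * M * ‖x - xd i‖ := by ring
  exact lt_of_le_of_lt (hbound.trans hle) (hneg v hv)
end

section
/- Let M > 0, ε > 0, x_1,…,x_N ∈ ℝ^n, f_1,…,f_N ∈ ℝ^n, let V ⊆ ℝ^n be a finite set, and let g̃_1,…,g̃_N ∈ ℝ^n be such that for every v ∈ V: Σ_{i=1}^N (⟨g̃_i, f_i⟩ + M·‖g̃_i‖·‖v − x_i‖) ≤ −ε. Then every x ∈ conv(V) satisfies: there exists i ∈ {1,…,N} with ‖x − x_i‖ < ‖f_i‖/M. Equivalently, conv(V) ⊆ ∪_{i=1}^N B(x_i, r_i), where r_i := ‖f_i‖/M and B(x_i, r_i) is the open Euclidean ball of center x_i and radius r_i. -/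
lemma convexOn_finset_sum {ι E : Type*} [NormedAddCommGroup E] [NormedSpace ℝ E]
    (s : Finset ι) (f : ι → E → ℝ) (hf : ∀ i ∈ s, ConvexOn ℝ Set.univ (f i)) :
    ConvexOn ℝ Set.univ (fun x => ∑ i ∈ s, f i x) := by
  classical
  induction s using Finset.induction_on with
  | empty => simpa using convexOn_const (0:ℝ) convex_univ
  | insert a t hnotmem ih =>
    simp only [Finset.sum_insert hnotmem]
    exact (hf a (Finset.mem_insert_self a t)).add
      (ih fun i hi => hf i (Finset.mem_insert_of_mem hi))

lemma convexOn_norm_sub {E : Type*} [NormedAddCommGroup E] [NormedSpace ℝ E] (c : E) :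
    ConvexOn ℝ Set.univ (fun x : E => ‖x - c‖) := by
  refine ⟨convex_univ, fun x _ y _ a b ha hb hab => ?_⟩
  calc ‖a • x + b • y - c‖ = ‖a • (x - c) + b • (y - c)‖ := by
        rw [smul_sub, smul_sub, sub_add_sub_comm, ← add_smul, hab, one_smul]
    _ ≤ ‖a • (x - c)‖ + ‖b • (y - c)‖ := norm_add_le _ _
    _ = a * ‖x - c‖ + b * ‖y - c‖ := by
        rw [norm_smul, norm_smul, Real.norm_of_nonneg ha, Real.norm_of_nonneg hb]

/-- covering necessary condition, Lemma 1. -/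
theorem covering_necessary_condition {n N : ℕ}
    (M ε : ℝ) (hM : 0 < M) (hε : 0 < ε)
    (xd fd : Fin N → EuclideanSpace ℝ (Fin n))
    (V : Finset (EuclideanSpace ℝ (Fin n)))
    (gtil : Fin N → EuclideanSpace ℝ (Fin n))
    (hneg : ∀ v ∈ V, ∑ i, ((inner ℝ (gtil i) (fd i) : ℝ) + M * ‖gtil i‖ * ‖v - xd i‖) ≤ -ε) :
    ∀ x ∈ convexHull ℝ (V : Set (EuclideanSpace ℝ (Fin n))),
      ∃ i : Fin N, ‖x - xd i‖ < ‖fd i‖ / M := by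
  intro x hx
  set h : EuclideanSpace ℝ (Fin n) → ℝ :=
    fun x => ∑ i, ((inner ℝ (gtil i) (fd i) : ℝ) + M * ‖gtil i‖ * ‖x - xd i‖) with hh
  have hconv : ConvexOn ℝ Set.univ h := by
    apply convexOn_finset_sum Finset.univ _ (fun i _ => ?_)
    have h1 : ConvexOn ℝ Set.univ (fun y : EuclideanSpace ℝ (Fin n) =>
        M * ‖gtil i‖ * ‖y - xd i‖) :=
      (convexOn_norm_sub (xd i)).smul (by positivity)
    have := h1.add_const (inner ℝ (gtil i) (fd i) : ℝ)
    have heq : ((fun y : EuclideanSpace ℝ (Fin n) => M * ‖gtil i‖ * ‖y - xd i‖) +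
        fun _ => (inner ℝ (gtil i) (fd i) : ℝ)) =
        fun y => (inner ℝ (gtil i) (fd i) : ℝ) + M * ‖gtil i‖ * ‖y - xd i‖ := by
      funext y
      simp [Pi.add_apply]
      ring
    rw [heq] at this
    exact this
  have hle : h x ≤ -ε := by
    have hsub : convexHull ℝ (V : Set (EuclideanSpace ℝ (Fin n))) ⊆
        {y | y ∈ Set.univ ∧ h y ≤ -ε} := by
      apply convexHull_min
      · intro v hv; exact ⟨trivial, hneg v hv⟩
      · exact hconv.convex_le _
    exact (hsub hx).2
  by_contra hcon
  push_neg at hcon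
  have hterm : ∀ i : Fin N,
      (0:ℝ) ≤ (inner ℝ (gtil i) (fd i) : ℝ) + M * ‖gtil i‖ * ‖x - xd i‖ := by
    intro i
    have h1 : ‖fd i‖ / M ≤ ‖x - xd i‖ := hcon i
    have h2 : ‖fd i‖ ≤ M * ‖x - xd i‖ := (div_le_iff₀' hM).mp h1
    have hcs : -((inner ℝ (gtil i) (fd i) : ℝ)) ≤ ‖gtil i‖ * ‖fd i‖ := by
      have := abs_real_inner_le_norm (gtil i) (fd i)
      linarith [neg_abs_le (inner ℝ (gtil i) (fd i) : ℝ)]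
    nlinarith [norm_nonneg (gtil i), norm_nonneg (fd i), norm_nonneg (x - xd i)]
  have : (0:ℝ) ≤ h x := Finset.sum_nonneg fun i _ => hterm i
  linarith
end

section
/- Let X ⊆ ℝ^n be a compact polytope, X_s ⊆ X compact with 0 ∈ X_s, D = {(x_i, f_i)}_{i=1}^{N_D} ⊆ ℝ^n × ℝ^n a dataset, M ≥ 0, ε > 0. Let {C_k = conv(V_k)}_{k=1}^{N_C} be a tessellation of X and g_k ∈ ℝ^n, b_k ∈ ℝ parameters whose affine pieces agree on overlaps (for all k, ℓ and all x ∈ C_k ∩ C_ℓ, ⟨g_k, x⟩ + b_k = ⟨g_ℓ, x⟩ + b_ℓ), defining a continuous function L : X → ℝ by L(x) = ⟨g_k, x⟩ + b_k for x ∈ C_k. Suppose that for every k with C_k ∩ (X \ X_s) ≠ ∅ there exist g̃_{1,k},…,g̃_{N_D,k} ∈ ℝ^n with Σ_{i=1}^{N_D} g̃_{i,k} = g_k and, for every vertex v ∈ V_k, Σ_{i=1}^{N_D} (⟨g̃_{i,k}, f_i⟩ + ‖g̃_{i,k}‖·M·‖v − x_i‖) ≤ −ε. Let β ∈ ℝ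 be such that the sublevel set S := {x ∈ X : L(x) ≤ β} satisfies X_s ⊆ S and S ∩ ∂X = ∅. Then for every h : ℝ^n → ℝ^n satisfying ‖h(x) − h(y)‖ ≤ M‖x − y‖ for all x, y, h(x_i) = f_i for all i, and the stability prior with respect to X_s, every solution of x' = h(x) with initial condition in the interior of S converges to 0 as t → ∞. -/
open Filter Metric Topology

/-- A set is a polytope: a finite union of convex hulls of finite sets. -/
def IsPolytope {n : ℕ} (X : Set (EuclideanSpace ℝ (Fin n))) : Prop :=
  ∃ (m : ℕ) (W : Fin m → Finset (EuclideanSpace ℝ (Fin n))),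
    X = ⋃ i, convexHull ℝ (W i : Set (EuclideanSpace ℝ (Fin n)))

/-- Pointwise decrease bound on one cell. -/
lemma pointwise_dec {n Nd : ℕ} (xd fd : Fin Nd → EuclideanSpace ℝ (Fin n)) (M ε : ℝ)
    (hM : 0 ≤ M) (gtil : Fin Nd → EuclideanSpace ℝ (Fin n)) (V : Finset (EuclideanSpace ℝ (Fin n)))
    (g : EuclideanSpace ℝ (Fin n))
    (hsum : ∑ i, gtil i = g)
    (hv : ∀ v ∈ V, ∑ i, ((inner ℝ (gtil i) (fd i) : ℝ) + ‖gtil i‖ * M * ‖v - xd i‖) ≤ -ε)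
    (h : EuclideanSpace ℝ (Fin n) → EuclideanSpace ℝ (Fin n))
    (hlip : ∀ x y, ‖h x - h y‖ ≤ M * ‖x - y‖) (hd : ∀ i, h (xd i) = fd i)
    {y : EuclideanSpace ℝ (Fin n)}
    (hy : y ∈ convexHull ℝ (V : Set (EuclideanSpace ℝ (Fin n)))) :
    (inner ℝ g (h y) : ℝ) ≤ -ε := by
  set φ : EuclideanSpace ℝ (Fin n) → ℝ :=
    fun y => ∑ i, ((inner ℝ (gtil i) (fd i) : ℝ) + ‖gtil i‖ * M * ‖y - xd i‖) with hφ
  have hconv : Convex ℝ {y : EuclideanSpace ℝ (Fin n) | φ y ≤ -ε} := by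
    intro p hp q hq a c ha hc hac
    simp only [Set.mem_setOf_eq] at hp hq ⊢
    have key : φ (a • p + c • q) ≤ a * φ p + c * φ q := by
      rw [hφ]
      simp only [Finset.mul_sum, ← Finset.sum_add_distrib]
      apply Finset.sum_le_sum
      intro i _
      have hcomb : a • p + c • q - xd i = a • (p - xd i) + c • (q - xd i) := by
        have h' : a • (p - xd i) + c • (q - xd i) = a • p + c • q - (a + c) • xd i := by
          rw [add_smul, smul_sub, smul_sub]; abel
        rw [h', hac, one_smul]
      have hn : ‖a • p + c • q - xd i‖ ≤ a * ‖p - xd i‖ + c * ‖q - xd i‖ := by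
        rw [hcomb]
        calc ‖a • (p - xd i) + c • (q - xd i)‖ ≤ ‖a • (p - xd i)‖ + ‖c • (q - xd i)‖ :=
              norm_add_le _ _
          _ = a * ‖p - xd i‖ + c * ‖q - xd i‖ := by
              rw [norm_smul, norm_smul, Real.norm_eq_abs, Real.norm_eq_abs,
                abs_of_nonneg ha, abs_of_nonneg hc]
      have h4 : 0 ≤ ‖gtil i‖ * M := mul_nonneg (norm_nonneg _) hM
      have h5 := mul_le_mul_of_nonneg_left hn h4
      have h6 : a * ((inner ℝ (gtil i) (fd i) : ℝ) + ‖gtil i‖ * M * ‖p - xd i‖)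
          + c * ((inner ℝ (gtil i) (fd i) : ℝ) + ‖gtil i‖ * M * ‖q - xd i‖)
          = (a + c) * (inner ℝ (gtil i) (fd i) : ℝ)
            + ‖gtil i‖ * M * (a * ‖p - xd i‖ + c * ‖q - xd i‖) := by ring
      rw [h6, hac, one_mul]
      linarith
    calc φ (a • p + c • q) ≤ a * φ p + c * φ q := key
      _ ≤ a * (-ε) + c * (-ε) := add_le_add
          (mul_le_mul_of_nonneg_left hp ha) (mul_le_mul_of_nonneg_left hq hc)
      _ = -ε := by rw [← add_mul, hac, one_mul]
  have hy' : φ y ≤ -ε := convexHull_min (fun v hv' => hv v hv') hconv hy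
  calc (inner ℝ g (h y) : ℝ) = ∑ i, (inner ℝ (gtil i) (h y) : ℝ) := by
        rw [← hsum, sum_inner]
    _ ≤ φ y := by
        apply Finset.sum_le_sum
        intro i _
        have h1 : (inner ℝ (gtil i) (h y - fd i) : ℝ)
            = inner ℝ (gtil i) (h y) - inner ℝ (gtil i) (fd i) := inner_sub_right _ _ _
        have h2 : (inner ℝ (gtil i) (h y - fd i) : ℝ) ≤ ‖gtil i‖ * ‖h y - fd i‖ :=
          real_inner_le_norm _ _
        have h3 : ‖h y - fd i‖ ≤ M * ‖y - xd i‖ := by rw [← hd i]; exact hlip y (xd i)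
        have h4 : 0 ≤ ‖gtil i‖ := norm_nonneg _
        have h5 : ‖gtil i‖ * ‖h y - fd i‖ ≤ ‖gtil i‖ * (M * ‖y - xd i‖) :=
          mul_le_mul_of_nonneg_left h3 h4
        have h6 : ‖gtil i‖ * M * ‖y - xd i‖ = ‖gtil i‖ * (M * ‖y - xd i‖) := by ring
        linarith
    _ ≤ -ε := hy'

/-- region of attraction via sublevel sets of the learnt PWA function,
Corollary 4. -/
theorem sublevel_set_roa {n Nd Nc : ℕ}
    (X Xs : Set (EuclideanSpace ℝ (Fin n)))
    (hXcomp : IsCompact X) (hXpoly : IsPolytope X)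
    (hXs : IsCompact Xs) (hXsX : Xs ⊆ X) (h0 : (0 : EuclideanSpace ℝ (Fin n)) ∈ Xs)
    -- the dataset
    (xd fd : Fin Nd → EuclideanSpace ℝ (Fin n))
    (M ε : ℝ) (hM : 0 ≤ M) (hε : 0 < ε)
    -- the tessellation `{C k = conv (V k)}` of `X`
    (V : Fin Nc → Finset (EuclideanSpace ℝ (Fin n)))
    (C : Fin Nc → Set (EuclideanSpace ℝ (Fin n)))
    (hCk : ∀ k, C k = convexHull ℝ (V k : Set (EuclideanSpace ℝ (Fin n))))
    (hcover : (⋃ k, C k) = X)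
    (hdisj : ∀ k l, k ≠ l → interior (C k) ∩ interior (C l) = ∅)
    -- the PWA data, agreeing on overlaps, defining a continuous `L` on `X`
    (g : Fin Nc → EuclideanSpace ℝ (Fin n)) (b : Fin Nc → ℝ)
    (hagree : ∀ k l, ∀ x ∈ C k ∩ C l, (inner ℝ (g k) x : ℝ) + b k = (inner ℝ (g l) x : ℝ) + b l)
    (L : EuclideanSpace ℝ (Fin n) → ℝ)
    (hLin : ∀ k, ∀ x ∈ C k, L x = (inner ℝ (g k) x : ℝ) + b k)
    -- robust decrease condition
    (hdec : ∀ k, (C k ∩ (X \ Xs)).Nonempty →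
      ∃ gtil : Fin Nd → EuclideanSpace ℝ (Fin n), (∑ i, gtil i = g k) ∧
        ∀ v ∈ V k, ∑ i, ((inner ℝ (gtil i) (fd i) : ℝ) + ‖gtil i‖ * M * ‖v - xd i‖) ≤ -ε)
    -- the sublevel set
    (β : ℝ) (S : Set (EuclideanSpace ℝ (Fin n))) (hS : S = {x ∈ X | L x ≤ β})
    (hXsS : Xs ⊆ S) (hSbdy : S ∩ frontier X = ∅) :
    ∀ h : EuclideanSpace ℝ (Fin n) → EuclideanSpace ℝ (Fin n),
      (∀ x y, ‖h x - h y‖ ≤ M * ‖x - y‖) → (∀ i, h (xd i) = fd i) →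
      StabilityPrior h Xs →
      ∀ x₀ ∈ interior S, ∀ x : ℝ → EuclideanSpace ℝ (Fin n),
        IsSolution h x₀ x → Tendsto x atTop (nhds 0) := by
  intro h hlip hdata hprior x₀ hx₀ x hsol
  obtain ⟨hx0, hx'⟩ := hsol
  have hXclosed : IsClosed X := hXcomp.isClosed
  have hCclosed : ∀ k, IsClosed (C k) := by
    intro k
    rw [hCk]
    exact ((V k).finite_toSet.isCompact_convexHull ℝ).isClosed
  -- continuity of L on X
  have hLcont : ContinuousOn L X := by
    rw [← hcover]
    refine (locallyFinite_of_finite C).continuousOn_iUnion hCclosed ?_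
    intro k
    refine ContinuousOn.congr (f := fun y => (inner ℝ (g k) y : ℝ) + b k) ?_ ?_
    · exact ((continuous_const.inner continuous_id).add continuous_const).continuousOn
    · intro y hy; exact hLin k y hy
  have hSX : S ⊆ X := by rw [hS]; exact fun y hy => hy.1
  have hSclosed : IsClosed S := by
    have : S = X ∩ L ⁻¹' Set.Iic β := by
      rw [hS]; ext y; simp [Set.mem_setOf_eq]
    rw [this]
    exact hLcont.preimage_isClosed_of_isClosed hXclosed isClosed_Iic
  have hSint : S ⊆ interior X := by
    intro y hy
    have h1 : y ∉ frontier X := by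
      intro hf
      exact absurd (Set.mem_inter hy hf) (by rw [hSbdy]; exact Set.notMem_empty y)
    have h2 : y ∈ X := hSX hy
    rw [hXclosed.frontier_eq] at h1
    by_contra h3
    exact h1 ⟨h2, h3⟩
  -- pointwise decrease
  have hpt : ∀ y ∈ S \ Xs, ∀ k, y ∈ C k → (inner ℝ (g k) (h y) : ℝ) ≤ -ε := by
    intro y hy k hk
    obtain ⟨gtil, hsum, hv⟩ := hdec k ⟨y, hk, hSX hy.1, hy.2⟩
    exact pointwise_dec xd fd M ε hM gtil (V k) (g k) hsum hv h hlip hdata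
      (by rw [← hCk]; exact hk)
  -- decrease along the solution
  have hdecr : ∀ a c : ℝ, 0 ≤ a → (∀ s ∈ Set.Icc a c, x s ∈ S \ Xs) →
      ∀ t ∈ Set.Icc a c, L (x t) ≤ L (x a) - ε * (t - a) := by
    intro a c ha hmem
    have hxc : ContinuousOn x (Set.Icc a c) := by
      intro t ht
      exact ((hx' t (ha.trans ht.1)).continuousAt).continuousWithinAt
    refine image_le_of_liminf_slope_right_le_deriv_boundary
      (f := fun t => L (x t)) (B := fun t => L (x a) - ε * (t - a)) (B' := fun _ => -ε)
      ?_ ?_ ?_ ?_ ?_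
    · exact hLcont.comp hxc fun t ht => hSX (hmem t ht).1
    · simp
    · fun_prop
    · intro t _
      have : HasDerivAt (fun t : ℝ => L (x a) - ε * (t - a)) (-ε) t := by
        simpa using (((hasDerivAt_id t).sub_const a).const_mul ε).const_sub (L (x a))
      exact this.hasDerivWithinAt
    · intro t ht r hr
      have ht0 : 0 ≤ t := ha.trans ht.1
      have hev : ∀ᶠ z in 𝓝[>] t, z ∈ Set.Icc a c := by
        filter_upwards [Ioc_mem_nhdsGT_of_mem ⟨le_refl t, ht.2⟩] with z hz
        exact ⟨ht.1.trans hz.1.le, hz.2⟩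
      have hevX : ∀ᶠ z in 𝓝[>] t, x z ∈ ⋃ k, C k := by
        filter_upwards [hev] with z hz
        rw [hcover]; exact hSX (hmem z hz).1
      obtain ⟨k, hk⟩ : ∃ k, ∃ᶠ z in 𝓝[>] t, x z ∈ C k := by
        by_contra hcon
        push_neg at hcon
        obtain ⟨z, hz1, hz2⟩ := (hevX.and (eventually_all.2 hcon)).exists
        rw [Set.mem_iUnion] at hz1
        obtain ⟨k, hk⟩ := hz1
        exact hz2 k hk
      have hxt_cont : ContinuousAt x t := (hx' t ht0).continuousAt
      have hxtk : x t ∈ C k :=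
        (hCclosed k).closure_subset
          (mem_closure_of_frequently_of_tendsto hk (hxt_cont.tendsto.mono_left nhdsWithin_le_nhds))
      have hbnd : (inner ℝ (g k) (h (x t)) : ℝ) ≤ -ε :=
        hpt (x t) (hmem t ⟨ht.1, ht.2.le⟩) k hxtk
      have hslope : Tendsto (slope x t) (𝓝[≠] t) (𝓝 (h (x t))) :=
        hasDerivAt_iff_tendsto_slope.1 (hx' t ht0)
      set F := 𝓝[>] t ⊓ 𝓟 {z | x z ∈ C k} with hF
      have hFne : F.NeBot := frequently_iff_neBot.1 hk
      have hFle : F ≤ 𝓝[≠] t :=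
        le_trans inf_le_left (nhdsWithin_mono t fun z hz => ne_of_gt hz)
      have h2 : Tendsto (fun z => (inner ℝ (g k) (slope x t z) : ℝ)) F
          (𝓝 (inner ℝ (g k) (h (x t)))) :=
        tendsto_const_nhds.inner (hslope.mono_left hFle)
      have hmemF : ∀ᶠ z in F, x z ∈ C k := by
        have : {z : ℝ | x z ∈ C k} ∈ F := mem_inf_of_right (mem_principal_self _)
        filter_upwards [this] with z hz using hz
      have h3 : ∀ᶠ z in F, slope (fun s => L (x s)) t z = (inner ℝ (g k) (slope x t z) : ℝ) := by
        filter_upwards [hmemF] with z hz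
        show slope (fun s => L (x s)) t z = _
        simp only [slope_def_module, hLin k (x z) hz, hLin k (x t) hxtk,
          inner_smul_right, inner_sub_right, smul_eq_mul]
        ring
      have h4 : ∀ᶠ z in F, slope (fun s => L (x s)) t z < r := by
        filter_upwards [h3, h2.eventually_lt_const (lt_of_le_of_lt hbnd hr)] with z hz1 hz2
        rw [hz1]; exact hz2
      exact h4.frequently.filter_mono inf_le_left
  -- minimum of L on X
  obtain ⟨z₀, hz₀X, hz₀min⟩ := hXcomp.exists_isMinOn ⟨0, hXsX h0⟩ hLcont
  set m := L z₀ with hm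
  -- the trajectory enters Xs
  have hx₀S : x 0 ∈ S := by rw [hx0]; exact interior_subset hx₀
  obtain ⟨T₀, hT₀0, hT₀⟩ : ∃ T, 0 ≤ T ∧ x T ∈ Xs := by
    by_contra hcon
    push_neg at hcon
    have hall : ∀ t : ℝ, 0 ≤ t → x t ∈ S := by
      by_contra hc2
      push_neg at hc2
      obtain ⟨t₁, ht₁0, ht₁⟩ := hc2
      set E' := {t : ℝ | 0 ≤ t ∧ x t ∉ S} with hE'
      have hEne : E'.Nonempty := ⟨t₁, ht₁0, ht₁⟩
      have hEbd : BddBelow E' := ⟨0, fun t ht => ht.1⟩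
      set τ := sInf E' with hτ
      have hτ0 : 0 ≤ τ := le_csInf hEne fun t ht => ht.1
      have hbefore : ∀ s, 0 ≤ s → s < τ → x s ∈ S := by
        intro s hs hsτ
        by_contra hns
        exact absurd (csInf_le hEbd ⟨hs, hns⟩) (not_le.2 hsτ)
      have hτS : x τ ∈ S := by
        rcases eq_or_lt_of_le hτ0 with heq | hlt
        · rw [← heq]; exact hx₀S
        · have htend : Tendsto x (𝓝[<] τ) (𝓝 (x τ)) :=
            ((hx' τ hτ0).continuousAt.tendsto).mono_left nhdsWithin_le_nhds
          refine hSclosed.mem_of_tendsto htend ?_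
          filter_upwards [Ioo_mem_nhdsLT_of_mem (⟨hlt, le_refl τ⟩ : τ ∈ Set.Ioc 0 τ)] with s hs
          exact hbefore s hs.1.le hs.2
      have hτint : x τ ∈ interior S := by
        rcases eq_or_lt_of_le hτ0 with heq | hlt
        · rw [← heq, hx0]; exact hx₀
        · have hmem : ∀ s ∈ Set.Icc 0 τ, x s ∈ S \ Xs := by
            intro s hs
            refine ⟨?_, hcon s hs.1⟩
            rcases eq_or_lt_of_le hs.2 with h' | h'
            · rw [h']; exact hτS
            · exact hbefore s hs.1 h'
          have hLτ : L (x τ) ≤ L (x 0) - ε * (τ - 0) := hdecr 0 τ le_rfl hmem τ ⟨hτ0, le_rfl⟩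
          have hLβ : L (x τ) < β := by
            have h1 : L (x 0) ≤ β := by
              have := hx₀S; rw [hS] at this; exact this.2
            nlinarith
          have hτX : x τ ∈ interior X := hSint hτS
          have hLca : ContinuousAt L (x τ) :=
            hLcont.continuousAt (mem_interior_iff_mem_nhds.1 hτX)
          have hnb : S ∈ 𝓝 (x τ) := by
            have h1 : ∀ᶠ y in 𝓝 (x τ), L y < β := hLca.tendsto.eventually_lt_const hLβ
            have h2 : ∀ᶠ y in 𝓝 (x τ), y ∈ X :=
              mem_of_superset (isOpen_interior.mem_nhds hτX) interior_subset
            filter_upwards [h1, h2] with y hy1 hy2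
            rw [hS]; exact ⟨hy2, hy1.le⟩
          exact mem_interior_iff_mem_nhds.2 hnb
      have hev : ∀ᶠ s in 𝓝 τ, x s ∈ S :=
        (hx' τ hτ0).continuousAt.tendsto.eventually_mem (mem_interior_iff_mem_nhds.1 hτint)
      obtain ⟨δ', hδ', hball⟩ := Metric.eventually_nhds_iff.1 hev
      obtain ⟨e, heE, he⟩ := exists_lt_of_csInf_lt hEne (lt_add_of_pos_right τ hδ')
      have heτ : τ ≤ e := csInf_le hEbd heE
      exact heE.2 (hball (by rw [Real.dist_eq, abs_of_nonneg (by linarith)]; linarith))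
    -- decrease forever: contradiction
    have hmLe : m ≤ L (x 0) := hz₀min (hSX (hall 0 le_rfl))
    set T := (L (x 0) - m) / ε + 1 with hT
    have hT0 : 0 ≤ T := by
      have : 0 ≤ (L (x 0) - m) / ε := div_nonneg (by linarith) hε.le
      rw [hT]; linarith
    have hmemT : ∀ s ∈ Set.Icc 0 T, x s ∈ S \ Xs := fun s hs => ⟨hall s hs.1, hcon s hs.1⟩
    have hLT := hdecr 0 T le_rfl hmemT T ⟨hT0, le_rfl⟩
    have hmT : m ≤ L (x T) := hz₀min (hSX (hall T hT0))
    have hεT : ε * T = (L (x 0) - m) + ε := by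
      rw [hT, mul_add, mul_one, mul_div_cancel₀ _ hε.ne']
    simp only [sub_zero] at hLT
    linarith
  -- shift and apply the stability prior
  set y : ℝ → EuclideanSpace ℝ (Fin n) := fun t => x (t + T₀) with hy
  have hy0 : y 0 ∈ Xs := by simpa [hy] using hT₀
  have hy' : ∀ t : ℝ, 0 ≤ t → HasDerivAt y (h (y t)) t := by
    intro t ht
    have h1 : HasDerivAt x (h (x (t + T₀))) (t + T₀) := hx' _ (by linarith)
    have h2 : HasDerivAt (fun s : ℝ => s + T₀) 1 t := (hasDerivAt_id t).add_const T₀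
    have h3 := h1.scomp t h2
    rw [one_smul] at h3
    exact h3
  have hyt : Tendsto y atTop (nhds 0) := hprior.2.2 y hy0 hy'
  have hxy : x = fun t => y (t - T₀) := by
    funext t; simp [hy]
  rw [hxy]
  exact hyt.comp (tendsto_atTop_add_const_right atTop (-T₀) tendsto_id |>.congr fun t => by
    simp [sub_eq_add_neg])
end

section
/- Let f : ℝ² → ℝ² be the counterexample vector field. Then for every x = (x₁, x₂) ∈ ℝ² with ‖x‖ ≥ 3/4, one has ⟨f(x), sgn(‖x‖ − 1)·x⟩ = −‖x‖·|1 − ‖x‖|; in particular, this quantity is strictly negative whenever ‖x‖ ≥ 3/4 and ‖x‖ ≠ 1. -/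
/-- The vector `(a, b)` in Euclidean `ℝ²`. -/
noncomputable def vec2 (a b : ℝ) : EuclideanSpace ℝ (Fin 2) :=
  (WithLp.equiv 2 (Fin 2 → ℝ)).symm ![a, b]

/-- The radial speed of the counterexample vector field. -/
noncomputable def radialSpeed (x : EuclideanSpace ℝ (Fin 2)) : ℝ :=
  if 3/4 ≤ ‖x‖ then 1/‖x‖ - 1
  else if 1/4 ≤ ‖x‖ then 1 - 1/(2*‖x‖)
  else -1

/-- The counterexample vector field
`f(x) = ‖x‖·‖x − (1,0)‖²·(−x₂, x₁) + v_r(x)·x`. -/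
noncomputable def counterF (x : EuclideanSpace ℝ (Fin 2)) : EuclideanSpace ℝ (Fin 2) :=
  (‖x‖ * ‖x - vec2 1 0‖^2) • vec2 (-(x 1)) (x 0) + radialSpeed x • x

/-- Lyapunov decrease identity for the counterexample. -/
theorem counterexample_decrease_identity :
    (∀ x : EuclideanSpace ℝ (Fin 2), 3/4 ≤ ‖x‖ →
      (inner ℝ (counterF x) (Real.sign (‖x‖ - 1) • x) : ℝ) = -(‖x‖ * |1 - ‖x‖|)) ∧
    (∀ x : EuclideanSpace ℝ (Fin 2), 3/4 ≤ ‖x‖ → ‖x‖ ≠ 1 →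
      (inner ℝ (counterF x) (Real.sign (‖x‖ - 1) • x) : ℝ) < 0) := by
  have key : ∀ x : EuclideanSpace ℝ (Fin 2), 3/4 ≤ ‖x‖ →
      (inner ℝ (counterF x) x : ℝ) = ‖x‖ * (1 - ‖x‖) := by
    intro x hx
    have hx0 : ‖x‖ ≠ 0 := by positivity
    have hrot : (inner ℝ (vec2 (-(x 1)) (x 0)) x : ℝ) = 0 := by
      simp [vec2, PiLp.inner_apply, Fin.sum_univ_two]
      ring
    have hxx : (inner ℝ x x : ℝ) = ‖x‖ ^ 2 := real_inner_self_eq_norm_sq x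
    rw [counterF, radialSpeed, if_pos hx, inner_add_left, real_inner_smul_left,
      real_inner_smul_left, hrot, hxx]
    field_simp
    ring
  have main : ∀ x : EuclideanSpace ℝ (Fin 2), 3/4 ≤ ‖x‖ →
      (inner ℝ (counterF x) (Real.sign (‖x‖ - 1) • x) : ℝ) = -(‖x‖ * |1 - ‖x‖|) := by
    intro x hx
    rw [real_inner_smul_right, key x hx]
    rcases lt_trichotomy (‖x‖ - 1) 0 with h | h | h
    · rw [Real.sign_of_neg h, abs_of_pos (by linarith)]; ring
    · have h1 : ‖x‖ = 1 := by linarith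
      simp [h1]
    · rw [Real.sign_of_pos h, abs_of_neg (by linarith)]; ring
  refine ⟨main, fun x hx hne => ?_⟩
  rw [main x hx]
  have h1 : |1 - ‖x‖| > 0 := abs_pos.mpr (by intro h; exact hne (by linarith))
  have h2 : 0 < ‖x‖ := by linarith
  nlinarith
end

section
/- Let f : ℝ² → ℝ² be the counterexample vector field, and let x : ℝ → ℝ² satisfy ‖x(0)‖ ≥ 3/4 and, for every t ≥ 0, x is differentiable at t with derivative f(x(t)). Then for every t ≥ 0, ‖x(t)‖ = 1 + (‖x(0)‖ − 1)·e^{−t}. -/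
open scoped RealInnerProductSpace

lemma inner_counterF (y : EuclideanSpace ℝ (Fin 2)) :
    ⟪y, counterF y⟫ = radialSpeed y * ‖y‖^2 := by
  have h0 : ⟪y, vec2 (-(y 1)) (y 0)⟫ = 0 := by
    simp [vec2, PiLp.inner_apply, Fin.sum_univ_two, RCLike.inner_apply]
    ring
  rw [counterF, inner_add_right, real_inner_smul_right, real_inner_smul_right, h0,
    real_inner_self_eq_norm_sq]
  ring

lemma norm_hasDerivAt {x : ℝ → EuclideanSpace ℝ (Fin 2)} {t : ℝ}
    (hne : x t ≠ 0) (hd : HasDerivAt x (counterF (x t)) t) :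
    HasDerivAt (fun s => ‖x s‖) (radialSpeed (x t) * ‖x t‖) t := by
  have hnorm : ‖x t‖ ≠ 0 := norm_ne_zero_iff.mpr hne
  have h1 : HasDerivAt (fun s => (⟪x s, x s⟫ : ℝ)) (2 * (radialSpeed (x t) * ‖x t‖^2)) t := by
    have h := hd.inner ℝ hd
    have e2 : ⟪counterF (x t), x t⟫ = radialSpeed (x t) * ‖x t‖^2 := by
      rw [real_inner_comm]; exact inner_counterF _
    rw [inner_counterF, e2] at h
    rw [show 2 * (radialSpeed (x t) * ‖x t‖^2) = radialSpeed (x t) * ‖x t‖^2 + radialSpeed (x t) * ‖x t‖^2 by ring]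
    exact h
  have hs : (⟪x t, x t⟫ : ℝ) ≠ 0 := by
    rw [real_inner_self_eq_norm_sq]; positivity
  have h2 := (Real.hasDerivAt_sqrt hs).comp t h1
  have key : ∀ s, Real.sqrt ⟪x s, x s⟫ = ‖x s‖ := fun s => by
    rw [real_inner_self_eq_norm_sq, Real.sqrt_sq (norm_nonneg _)]
  have h3 : HasDerivAt (fun s => ‖x s‖)
      (1 / (2 * ‖x t‖) * (2 * (radialSpeed (x t) * ‖x t‖^2))) t := by
    simp only [Function.comp_def, key] at h2
    exact h2
  convert h3 using 1
  field_simp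

lemma phi_on_Icc {x : ℝ → EuclideanSpace ℝ (Fin 2)}
    (hx : ∀ t : ℝ, 0 ≤ t → HasDerivAt x (counterF (x t)) t) {T : ℝ} (hT : 0 ≤ T)
    (hge : ∀ s ∈ Set.Icc (0:ℝ) T, 3/4 ≤ ‖x s‖) :
    ∀ s ∈ Set.Icc (0:ℝ) T, ‖x s‖ = 1 + (‖x 0‖ - 1) * Real.exp (-s) := by
  set u : ℝ → ℝ := fun s => (‖x s‖ - 1) * Real.exp s with hu
  have hcont : ContinuousOn u (Set.Icc 0 T) := by
    intro s hs
    exact (((((hx s hs.1).continuousAt).norm).sub continuousAt_const).mul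
      Real.continuous_exp.continuousAt).continuousWithinAt
  have hderiv : ∀ s ∈ Set.Ico (0:ℝ) T, HasDerivWithinAt u 0 (Set.Ici s) s := by
    intro s hs
    have hges : 3/4 ≤ ‖x s‖ := hge s ⟨hs.1, hs.2.le⟩
    have hne : x s ≠ 0 := by
      intro h; rw [h, norm_zero] at hges; norm_num at hges
    have hnorm : ‖x s‖ ≠ 0 := by positivity
    have hn := norm_hasDerivAt hne (hx s hs.1)
    have hrs : radialSpeed (x s) = 1/‖x s‖ - 1 := if_pos hges
    have hd : HasDerivAt u
        ((radialSpeed (x s) * ‖x s‖) * Real.exp s + (‖x s‖ - 1) * Real.exp s) s :=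
      (hn.sub_const 1).mul (Real.hasDerivAt_exp s)
    have hval : (radialSpeed (x s) * ‖x s‖) * Real.exp s + (‖x s‖ - 1) * Real.exp s = 0 := by
      rw [hrs]; field_simp; ring
    rw [hval] at hd
    exact hd.hasDerivWithinAt
  have hconst := constant_of_has_deriv_right_zero hcont hderiv
  intro s hs
  have h1 : u s = u 0 := hconst s hs
  have h0' : u 0 = ‖x 0‖ - 1 := by simp [hu]
  rw [h0'] at h1
  have hexp : Real.exp s ≠ 0 := Real.exp_ne_zero s
  have h1' : (‖x s‖ - 1) * Real.exp s = ‖x 0‖ - 1 := h1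
  have : ‖x s‖ - 1 = (‖x 0‖ - 1) * Real.exp (-s) := by
    rw [Real.exp_neg]
    field_simp
    linarith [h1']
  linarith

/-- radial behaviour of trajectories starting with `‖x(0)‖ ≥ 3/4`. -/
theorem counterexample_radial_outer
    (x : ℝ → EuclideanSpace ℝ (Fin 2))
    (h0 : 3/4 ≤ ‖x 0‖)
    (hx : ∀ t : ℝ, 0 ≤ t → HasDerivAt x (counterF (x t)) t) :
    ∀ t : ℝ, 0 ≤ t → ‖x t‖ = 1 + (‖x 0‖ - 1) * Real.exp (-t) := by
  set B : Set ℝ := {s : ℝ | 0 ≤ s ∧ ‖x s‖ < 3/4} with hB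
  have hempty : B = ∅ := by
    by_contra hne'
    have hne : B.Nonempty := Set.nonempty_iff_ne_empty.mpr hne'
    have bdd : BddBelow B := ⟨0, fun s hs => hs.1⟩
    set T := sInf B with hTdef
    have hT0 : 0 ≤ T := le_csInf hne fun s hs => hs.1
    have hlt : ∀ s, 0 ≤ s → s < T → 3/4 ≤ ‖x s‖ := by
      intro s h0s hsT
      by_contra h
      push_neg at h
      exact absurd (csInf_le bdd ⟨h0s, h⟩) (not_le.mpr hsT)
    have hcontT : ContinuousAt (fun s => ‖x s‖) T := ((hx T hT0).continuousAt).norm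
    have hTge : 3/4 ≤ ‖x T‖ := by
      by_contra h
      push_neg at h
      rcases eq_or_lt_of_le hT0 with hTz | hTp
      · rw [← hTz] at h; linarith
      · have hev : ∀ᶠ s in nhds T, ‖x s‖ < 3/4 := hcontT (Iio_mem_nhds h)
        obtain ⟨δ, hδpos, hδ⟩ := Metric.eventually_nhds_iff.mp hev
        set s := max (T/2) (T - δ/2) with hsdef
        have hsT : s < T := max_lt (by linarith) (by linarith)
        have hs0 : 0 ≤ s := le_trans (by linarith) (le_max_left _ _)
        have hdist : dist s T < δ := by
          rw [Real.dist_eq, abs_lt]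
          constructor
          · have : T - δ/2 ≤ s := le_max_right _ _
            linarith
          · linarith
        exact absurd (hδ hdist) (not_lt.mpr (hlt s hs0 hsT))
    have hge : ∀ s ∈ Set.Icc (0:ℝ) T, 3/4 ≤ ‖x s‖ := by
      intro s hs
      rcases lt_or_eq_of_le hs.2 with h | h
      · exact hlt s hs.1 h
      · rw [h]; exact hTge
    have hphiT : ‖x T‖ = 1 + (‖x 0‖ - 1) * Real.exp (-T) :=
      phi_on_Icc hx hT0 hge T ⟨hT0, le_rfl⟩
    rcases eq_or_lt_of_le hTge with hTeq | hTgt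
    · -- boundary case: ‖x T‖ = 3/4 forces T = 0 and ‖x 0‖ = 3/4
      have hexp_le : Real.exp (-T) ≤ 1 := Real.exp_le_one_iff.mpr (by linarith)
      have hexp_pos : 0 < Real.exp (-T) := Real.exp_pos _
      have hab : (1 - ‖x 0‖) * Real.exp (-T) = 1/4 := by
        rw [← hTeq] at hphiT; nlinarith [hphiT]
      have ha : 1 - ‖x 0‖ ≤ 1/4 := by linarith
      have hexp1 : Real.exp (-T) = 1 := by nlinarith
      have hTzero : T = 0 := by
        have := Real.exp_eq_one_iff (-T) |>.mp hexp1
        linarith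
      have hx0 : ‖x 0‖ = 3/4 := by
        rw [hTzero] at hTeq; linarith
      -- derivative of the norm at 0 is 1/4 > 0
      have hne0 : x 0 ≠ 0 := by
        intro h; rw [h, norm_zero] at hx0; norm_num at hx0
      have hn := norm_hasDerivAt hne0 (hx 0 le_rfl)
      have hrs : radialSpeed (x 0) = 1/‖x 0‖ - 1 := if_pos h0
      have hval : radialSpeed (x 0) * ‖x 0‖ = 1/4 := by
        rw [hrs, hx0]; norm_num
      rw [hval, hasDerivAt_iff_tendsto_slope] at hn
      have hev : ∀ᶠ s in nhdsWithin 0 {(0:ℝ)}ᶜ, 0 < slope (fun s => ‖x s‖) 0 s :=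
        hn (Ioi_mem_nhds (by norm_num))
      obtain ⟨δ, hδpos, hδ⟩ := Metric.mem_nhdsWithin_iff.mp hev
      have hTlt : sInf B < δ := by rw [← hTdef, hTzero]; exact hδpos
      obtain ⟨s, hsB, hsδ⟩ := exists_lt_of_csInf_lt hne hTlt
      have hs0 : 0 ≤ s := hsB.1
      have hsne : s ≠ 0 := by
        intro h; rw [h] at hsB; have := hsB.2; rw [hx0] at this; linarith
      have hspos : 0 < s := lt_of_le_of_ne hs0 (Ne.symm hsne)
      have hsball : s ∈ Metric.ball (0:ℝ) δ ∩ {(0:ℝ)}ᶜ := by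
        constructor
        · rw [Metric.mem_ball, Real.dist_eq, sub_zero, abs_of_nonneg hs0]; exact hsδ
        · exact hsne
      have hslope : 0 < slope (fun s => ‖x s‖) 0 s := hδ hsball
      rw [slope_def_field] at hslope
      have : 0 < ‖x s‖ - ‖x 0‖ := by
        have hden : 0 < s - 0 := by linarith
        by_contra hc
        push_neg at hc
        have : (‖x s‖ - ‖x 0‖) / (s - 0) ≤ 0 := div_nonpos_of_nonpos_of_nonneg hc hden.le
        linarith
      have := hsB.2
      rw [hx0] at *
      linarith
    · -- interior case: ‖x T‖ > 3/4, contradiction with sInf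
      have hev : ∀ᶠ s in nhds T, 3/4 < ‖x s‖ := hcontT (Ioi_mem_nhds hTgt)
      obtain ⟨δ, hδpos, hδ⟩ := Metric.eventually_nhds_iff.mp hev
      obtain ⟨s, hsB, hsδ⟩ := exists_lt_of_csInf_lt hne (show sInf B < T + δ by
        rw [← hTdef]; linarith)
      have hsT : T ≤ s := by
        by_contra h
        push_neg at h
        exact absurd (hlt s hsB.1 h) (not_le.mpr hsB.2)
      have hdist : dist s T < δ := by
        rw [Real.dist_eq, abs_of_nonneg (by linarith)]
        linarith
      exact absurd (hδ hdist) (not_lt.mpr hsB.2.le)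
  intro t ht
  have hge : ∀ s ∈ Set.Icc (0:ℝ) t, 3/4 ≤ ‖x s‖ := by
    intro s hs
    by_contra h
    push_neg at h
    have : s ∈ B := ⟨hs.1, h⟩
    rw [hempty] at this
    exact this
  exact phi_on_Icc hx ht hge t ⟨ht, le_rfl⟩
end

section
/- Let f : ℝ² → ℝ² be the counterexample vector field, and let x : ℝ → ℝ² satisfy ‖x(0)‖ < 1/4 and, for every t ≥ 0, x is differentiable at t with derivative f(x(t)). Then for every t ≥ 0, ‖x(t)‖ = ‖x(0)‖·e^{−t}. -/
open scoped RealInnerProductSpace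

/-- radial behaviour of trajectories starting with `‖x(0)‖ < 1/4`. -/
theorem counterexample_radial_inner
    (x : ℝ → EuclideanSpace ℝ (Fin 2))
    (h0 : ‖x 0‖ < 1/4)
    (hx : ∀ t : ℝ, 0 ≤ t → HasDerivAt x (counterF (x t)) t) :
    ∀ t : ℝ, 0 ≤ t → ‖x t‖ = ‖x 0‖ * Real.exp (-t) := by
  set h : ℝ → ℝ := fun s => ⟪x s, x s⟫ * Real.exp (2*s) with hh
  -- key lemma: as long as the norm stays below 1/4, h is constant
  have key : ∀ T : ℝ, 0 ≤ T → (∀ s ∈ Set.Ico (0:ℝ) T, ‖x s‖ < 1/4) →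
      ‖x T‖^2 * Real.exp (2*T) = ‖x 0‖^2 := by
    intro T hT hsmall
    have hcont : ContinuousOn h (Set.Icc 0 T) := by
      intro s hs
      have hc : ContinuousAt x s := (hx s hs.1).continuousAt
      exact ((hc.inner hc).mul
        ((Real.continuous_exp.comp (continuous_const.mul continuous_id)).continuousAt)).continuousWithinAt
    have hderiv : ∀ s ∈ Set.Ico (0:ℝ) T, HasDerivWithinAt h 0 (Set.Ici s) s := by
      intro s hs
      have hxd := hx s hs.1
      have h14 : ‖x s‖ < 1/4 := hsmall s hs
      have hrs : radialSpeed (x s) = -1 := by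
        rw [radialSpeed, if_neg (by linarith), if_neg (by linarith)]
      have hin : HasDerivAt (fun u => ⟪x u, x u⟫)
          (⟪x s, counterF (x s)⟫ + ⟪counterF (x s), x s⟫) s :=
        HasDerivAt.inner ℝ hxd hxd
      have hval : ⟪x s, counterF (x s)⟫ + ⟪counterF (x s), x s⟫ = -2 * ⟪x s, x s⟫ := by
        rw [real_inner_comm (x s) (counterF (x s)), inner_counterF, hrs,
          real_inner_self_eq_norm_sq]
        ring
      rw [hval] at hin
      have hexp : HasDerivAt (fun u : ℝ => Real.exp (2*u)) (Real.exp (2*s) * 2) s :=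
        (Real.hasDerivAt_exp (2*s)).comp s (by simpa using (hasDerivAt_id s).const_mul 2)
      have hmul := hin.mul hexp
      have hz : -2 * ⟪x s, x s⟫ * Real.exp (2*s) + ⟪x s, x s⟫ * (Real.exp (2*s) * 2) = 0 := by
        ring
      rw [hz] at hmul
      exact hmul.hasDerivWithinAt
    have hconst := constant_of_has_deriv_right_zero hcont hderiv T
      (Set.right_mem_Icc.mpr hT)
    simp only [hh] at hconst
    rw [real_inner_self_eq_norm_sq, real_inner_self_eq_norm_sq] at hconst
    simpa using hconst
  -- the trajectory never reaches norm 1/4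
  have hsmall : ∀ t : ℝ, 0 ≤ t → ‖x t‖ < 1/4 := by
    by_contra hcon
    push_neg at hcon
    obtain ⟨t0, ht0, ht0n⟩ := hcon
    set B : Set ℝ := {t | 0 ≤ t ∧ 1/4 ≤ ‖x t‖} with hB
    have hBne : B.Nonempty := ⟨t0, ht0, ht0n⟩
    have hBbd : BddBelow B := ⟨0, fun b hb => hb.1⟩
    set T := sInf B with hTdef
    have hT0 : 0 ≤ T := le_csInf hBne fun b hb => hb.1
    have hTB : 1/4 ≤ ‖x T‖ := by
      by_contra hlt
      push_neg at hlt
      have hc : ContinuousAt (fun s => ‖x s‖) T := (hx T hT0).continuousAt.norm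
      have hev : ∀ᶠ s in nhds T, ‖x s‖ < 1/4 := hc.eventually_lt continuousAt_const hlt
      obtain ⟨δ, hδ, hδ'⟩ := Metric.eventually_nhds_iff.mp hev
      obtain ⟨b, hbB, hbl⟩ := exists_lt_of_csInf_lt hBne (show T < T + δ by linarith)
      have hbT : T ≤ b := csInf_le hBbd hbB
      have : ‖x b‖ < 1/4 := hδ' (by rw [Real.dist_eq]; rw [abs_lt]; constructor <;> linarith)
      linarith [hbB.2]
    have hsm : ∀ s ∈ Set.Ico (0:ℝ) T, ‖x s‖ < 1/4 := by
      intro s hs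
      by_contra hns
      push_neg at hns
      have : T ≤ s := csInf_le hBbd ⟨hs.1, hns⟩
      linarith [hs.2]
    have hk := key T hT0 hsm
    have hexp1 : (1:ℝ) ≤ Real.exp (2*T) := Real.one_le_exp (by linarith)
    nlinarith [norm_nonneg (x 0), norm_nonneg (x T), sq_nonneg (‖x T‖)]
  -- conclude
  intro t ht
  have hk := key t ht fun s hs => hsmall s hs.1
  have hsq : ‖x t‖^2 = (‖x 0‖ * Real.exp (-t))^2 := by
    have he : Real.exp (-t) ^ 2 * Real.exp (2*t) = 1 := by
      rw [← Real.exp_nat_mul]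
      rw [← Real.exp_add]
      norm_num
    nlinarith [Real.exp_pos (2*t)]
  calc ‖x t‖ = Real.sqrt (‖x t‖^2) := (Real.sqrt_sq (norm_nonneg _)).symm
    _ = Real.sqrt ((‖x 0‖ * Real.exp (-t))^2) := by rw [hsq]
    _ = ‖x 0‖ * Real.exp (-t) := Real.sqrt_sq (by positivity)
end
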